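/- arXiv:2604.09795 — 9 statements merged into one kernel-verified Lean document; each statement's English description precedes it below -/
import Mathlib

section
/- Let μ₂ > 0 and let α₂ : ℝ → ℝ be a differentiable function satisfying the ODE α₂'(t) = μ₂ · cos(α₂(t)) for all t ≥ 0, with initial condition α₂(0) ∈ (-π/2, π/2). Then for all t ≥ 0, sin(α₂(t)) = tanh(μ₂ t + artanh(sin(α₂(0)))). -/
open Real Set

/-- The inverse hyperbolic tangent. -/
noncomputable def artanh (x : ℝ) : ℝ := (1 / 2) * Real.log ((1 + x) / (1 - x))

lemma my_hasDerivAt_tanh (x : ℝ) : HasDerivAt Real.tanh (1 - Real.tanh x ^ 2) x := by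
  have h := (Real.hasDerivAt_sinh x).div (Real.hasDerivAt_cosh x) (Real.cosh_pos x).ne'
  have heq : (Real.sinh / Real.cosh) = Real.tanh :=
    funext fun y => (Real.tanh_eq_sinh_div_cosh y).symm
  rw [heq] at h
  refine h.congr_deriv ?_
  have hc := (Real.cosh_pos x).ne'
  rw [Real.tanh_eq_sinh_div_cosh]
  have hp := Real.cosh_sq_sub_sinh_sq x
  field_simp

lemma my_abs_tanh_le_one (x : ℝ) : |Real.tanh x| ≤ 1 := by
  have hc := Real.cosh_pos x
  rw [Real.tanh_eq_sinh_div_cosh, abs_div, abs_of_pos hc, div_le_one hc]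
  nlinarith [Real.cosh_sq_sub_sinh_sq x, abs_nonneg (Real.sinh x), sq_abs (Real.sinh x)]

lemma my_tanh_artanh {x : ℝ} (h : |x| < 1) : Real.tanh (_root_.artanh x) = x := by
  obtain ⟨h1, h2⟩ := abs_lt.1 h
  have hx1 : (0:ℝ) < 1 - x := by linarith
  have hx2 : (0:ℝ) < 1 + x := by linarith
  set y := _root_.artanh x with hy
  have hE : Real.exp y * Real.exp y = (1 + x) / (1 - x) := by
    rw [← Real.exp_add, hy, _root_.artanh]
    have : (1:ℝ)/2 * Real.log ((1 + x)/(1 - x)) + 1/2 * Real.log ((1 + x)/(1 - x))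
        = Real.log ((1 + x)/(1 - x)) := by ring
    rw [this, Real.exp_log (by positivity)]
  have hEpos := Real.exp_pos y
  rw [Real.tanh_eq_sinh_div_cosh, Real.sinh_eq, Real.cosh_eq, Real.exp_neg]
  rw [div_div_div_cancel_right₀]
  · have hE2 : (1 - x) * (Real.exp y * Real.exp y) = 1 + x := by
      rw [hE]; field_simp
    field_simp
    nlinarith [hE2]
  · norm_num

/-- Under the constant bearing steering control, the follower bearing `α₂` obeys
`α₂' = μ₂ cos α₂`, and its sine is an explicit hyperbolic tangent. -/
theorem sin_bearing_eq_tanh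
    (μ₂ : ℝ) (hμ₂ : 0 < μ₂) (α₂ : ℝ → ℝ)
    (hdiff : Differentiable ℝ α₂)
    (hODE : ∀ t : ℝ, 0 ≤ t → HasDerivAt α₂ (μ₂ * Real.cos (α₂ t)) t)
    (h0 : α₂ 0 ∈ Set.Ioo (-(π / 2)) (π / 2)) :
    ∀ t : ℝ, 0 ≤ t →
      Real.sin (α₂ t) = Real.tanh (μ₂ * t + _root_.artanh (Real.sin (α₂ 0))) := by
  intro t ht
  have hpi : (0:ℝ) < π / 2 := by positivity
  have hmem : α₂ 0 ∈ Icc (-(π/2)) (π/2) := ⟨h0.1.le, h0.2.le⟩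
  have hs0 : |Real.sin (α₂ 0)| < 1 := by
    rw [abs_lt]
    constructor
    · have := Real.strictMonoOn_sin ⟨le_refl _, by linarith⟩ hmem h0.1
      rwa [Real.sin_neg, Real.sin_pi_div_two] at this
    · have := Real.strictMonoOn_sin hmem ⟨by linarith, le_refl _⟩ h0.2
      rwa [Real.sin_pi_div_two] at this
  set c := _root_.artanh (Real.sin (α₂ 0)) with hc
  set g : ℝ → ℝ := fun s => Real.sin (α₂ s) - Real.tanh (μ₂ * s + c) with hg
  set g' : ℝ → ℝ := fun s =>
    -μ₂ * (Real.sin (α₂ s) + Real.tanh (μ₂ * s + c)) * g s with hg'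
  have hT : ∀ s : ℝ, HasDerivAt (fun u => Real.tanh (μ₂ * u + c))
      ((1 - Real.tanh (μ₂ * s + c) ^ 2) * μ₂) s := by
    intro s
    have hlin : HasDerivAt (fun u : ℝ => μ₂ * u + c) μ₂ s := by
      simpa using ((hasDerivAt_id s).const_mul μ₂).add_const c
    exact (my_hasDerivAt_tanh (μ₂ * s + c)).comp s hlin
  have hderiv : ∀ s ∈ Ico (0:ℝ) t, HasDerivWithinAt g (g' s) (Ici s) s := by
    intro s hs
    have h1 : HasDerivAt (fun u => Real.sin (α₂ u))
        (Real.cos (α₂ s) * (μ₂ * Real.cos (α₂ s))) s :=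
      (Real.hasDerivAt_sin (α₂ s)).comp s (hODE s hs.1)
    have h2 := (h1.sub (hT s))
    have heq : Real.cos (α₂ s) * (μ₂ * Real.cos (α₂ s))
        - (1 - Real.tanh (μ₂ * s + c) ^ 2) * μ₂ = g' s := by
      simp only [hg', hg]
      have := Real.cos_sq' (α₂ s)
      nlinarith [this]
    rw [heq] at h2
    exact h2.hasDerivWithinAt
  have hcont : ContinuousOn g (Icc 0 t) := by
    have hT' : Continuous fun u => Real.tanh (μ₂ * u + c) :=
      Differentiable.continuous (fun s => (hT s).differentiableAt)
    exact ((Real.continuous_sin.comp hdiff.continuous).sub hT').continuousOn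
  have h0' : ‖g 0‖ ≤ 0 := by
    simp only [hg, mul_zero, zero_add, hc, my_tanh_artanh hs0, sub_self, norm_zero, le_refl]
  have hbound : ∀ s ∈ Ico (0:ℝ) t, ‖g' s‖ ≤ (2 * μ₂) * ‖g s‖ + 0 := by
    intro s _
    simp only [hg', Real.norm_eq_abs, add_zero]
    rw [abs_mul]
    apply mul_le_mul_of_nonneg_right _ (abs_nonneg _)
    rw [abs_mul, abs_neg, abs_of_pos hμ₂]
    have h1 : |Real.sin (α₂ s) + Real.tanh (μ₂ * s + c)| ≤ 2 := by
      calc |Real.sin (α₂ s) + Real.tanh (μ₂ * s + c)|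
          ≤ |Real.sin (α₂ s)| + |Real.tanh (μ₂ * s + c)| := abs_add_le _ _
        _ ≤ 1 + 1 := add_le_add
            (abs_le.mpr ⟨Real.neg_one_le_sin _, Real.sin_le_one _⟩)
            (my_abs_tanh_le_one _)
        _ = 2 := by norm_num
    nlinarith [h1]
  have hgr := norm_le_gronwallBound_of_norm_deriv_right_le hcont hderiv h0' hbound t
    ⟨ht, le_refl t⟩
  have h2 : ‖g t‖ ≤ 0 := by simpa [gronwallBound_ε0] using hgr
  have h3 : g t = 0 := norm_le_zero_iff.mp h2
  simp only [hg] at h3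
  exact sub_eq_zero.mp h3
end

section
/- Let μ₂ > 0 and let α₂ : ℝ → ℝ be a differentiable function satisfying α₂'(t) = μ₂ · cos(α₂(t)) for all t ≥ 0, with initial condition α₂(0) ∈ (-π/2, π/2). Then sin(α₂(t)) → 1 as t → ∞, and moreover α₂(t) → π/2 as t → ∞. -/
open Real Set Filter

/-- Under the constant bearing steering control, `sin (α₂ t) → 1` and `α₂ t → π/2`
as `t → ∞`. -/
theorem bearing_tendsto_pi_div_two
    (μ₂ : ℝ) (hμ₂ : 0 < μ₂) (α₂ : ℝ → ℝ)
    (hdiff : Differentiable ℝ α₂)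
    (hODE : ∀ t : ℝ, 0 ≤ t → HasDerivAt α₂ (μ₂ * Real.cos (α₂ t)) t)
    (h0 : α₂ 0 ∈ Set.Ioo (-(π / 2)) (π / 2)) :
    Filter.Tendsto (fun t => Real.sin (α₂ t)) Filter.atTop (nhds 1) ∧
      Filter.Tendsto α₂ Filter.atTop (nhds (π / 2)) := by
  obtain ⟨hl, hr⟩ := h0
  set s : ℝ := Real.sin (α₂ 0) with hs_def
  have hs1 : s < 1 := by
    have := Real.sin_lt_sin_of_lt_of_le_pi_div_two hl.le le_rfl hr
    rwa [Real.sin_pi_div_two] at this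
  have hs2 : -1 < s := by
    have := Real.sin_lt_sin_of_lt_of_le_pi_div_two le_rfl hr.le hl
    rwa [Real.sin_neg, Real.sin_pi_div_two] at this
  set A : ℝ := (1 + s) / (1 - s) with hA_def
  have hA : 0 < A := div_pos (by linarith) (by linarith)
  set E : ℝ → ℝ := fun t => A * Real.exp (2 * μ₂ * t) with hE_def
  have hEpos : ∀ t, 0 < E t := fun t => mul_pos hA (Real.exp_pos _)
  set y : ℝ → ℝ := fun t => (E t - 1) / (E t + 1) with hy_def
  have hden : ∀ t, (0:ℝ) < E t + 1 := fun t => by linarith [hEpos t]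
  have hy_lt : ∀ t, y t < 1 := by
    intro t
    rw [hy_def, div_lt_one (hden t)]
    linarith [hEpos t]
  have hy_gt : ∀ t, -1 < y t := by
    intro t
    rw [hy_def, lt_div_iff₀ (hden t)]
    linarith [hEpos t]
  have hE' : ∀ t, HasDerivAt E (2 * μ₂ * E t) t := by
    intro t
    have h1 : HasDerivAt (fun u : ℝ => 2 * μ₂ * u) (2 * μ₂) t := by
      simpa using (hasDerivAt_id t).const_mul (2 * μ₂)
    have h2 := (h1.exp).const_mul A
    refine h2.congr_deriv ?_
    simp [hE_def]; ring
  have hy' : ∀ t, HasDerivAt y (μ₂ * (1 - y t ^ 2)) t := by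
    intro t
    have h := ((hE' t).sub_const 1).div ((hE' t).add_const 1) (hden t).ne'
    refine h.congr_deriv ?_
    rw [hy_def]
    have h0 := (hden t).ne'
    field_simp
    ring
  have hq : ∀ t, (0:ℝ) < 1 - y t ^ 2 := by
    intro t
    have := hy_lt t; have := hy_gt t
    nlinarith
  set g : ℝ → ℝ := fun t => Real.arcsin (y t) with hg_def
  have hsin_g : ∀ t, Real.sin (g t) = y t := fun t =>
    Real.sin_arcsin (hy_gt t).le (hy_lt t).le
  have hg' : ∀ t, HasDerivAt g (μ₂ * Real.cos (g t)) t := by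
    intro t
    have harc := Real.hasDerivAt_arcsin (hy_gt t).ne' (hy_lt t).ne
    have h := harc.comp t (hy' t)
    refine h.congr_deriv ?_
    rw [hg_def]
    rw [Real.cos_arcsin]
    have hq' := hq t
    have hsq : Real.sqrt (1 - y t ^ 2) * Real.sqrt (1 - y t ^ 2) = 1 - y t ^ 2 :=
      Real.mul_self_sqrt hq'.le
    have hsqpos : 0 < Real.sqrt (1 - y t ^ 2) := Real.sqrt_pos.mpr hq'
    field_simp
    nlinarith [hsq]
  have hy0 : y 0 = s := by
    have h1 : (1:ℝ) - s ≠ 0 := by linarith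
    rw [hy_def]
    simp only [hE_def, mul_zero, Real.exp_zero, mul_one]
    rw [hA_def]
    rw [div_eq_iff]
    · field_simp
      ring
    · intro hc
      rw [div_add' _ _ _ h1] at hc
      have : (1 + s) + (1 - s) = 0 := by
        have := div_eq_zero_iff.mp hc
        rcases this with h | h
        · linarith [h]
        · exact absurd h h1
      linarith
  have hg0 : g 0 = α₂ 0 := by
    rw [hg_def]; simp only [hy0, hs_def]
    exact Real.arcsin_sin hl.le hr.le
  have hEcont : Continuous E := by
    rw [hE_def]
    exact continuous_const.mul (Real.continuous_exp.comp (continuous_const.mul continuous_id))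
  have hy_cont : Continuous y :=
    (hEcont.sub continuous_const).div (hEcont.add continuous_const) (fun t => (hden t).ne')
  have hg_cont : Continuous g := Real.continuous_arcsin.comp hy_cont
  -- uniqueness of solutions
  have hLip : ∀ _t : ℝ, LipschitzWith (Real.toNNReal μ₂) (fun x => μ₂ * Real.cos x) := by
    intro _t
    apply lipschitzWith_of_nnnorm_deriv_le
    · exact fun x => (Real.differentiable_cos x).const_mul μ₂
    · intro x
      have : deriv (fun x => μ₂ * Real.cos x) x = μ₂ * (-Real.sin x) := by
        simpa using ((Real.hasDerivAt_cos x).const_mul μ₂).deriv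
      rw [← NNReal.coe_le_coe, coe_nnnorm, this]
      rw [Real.coe_toNNReal _ hμ₂.le, Real.norm_eq_abs, abs_mul, abs_neg,
        abs_of_pos hμ₂]
      nlinarith [abs_sin_le_one x, abs_nonneg (Real.sin x)]
  have heq : ∀ t : ℝ, 0 ≤ t → α₂ t = g t := by
    intro b hb
    have key := ODE_solution_unique_of_mem_Icc_right
      (v := fun _ x => μ₂ * Real.cos x) (s := fun _ => (univ : Set ℝ))
      (K := Real.toNNReal μ₂) (a := 0) (b := b) (f := α₂) (g := g)
      (fun t _ => (hLip t).lipschitzOnWith)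
      (hdiff.continuous.continuousOn)
      (fun t ht => (hODE t ht.1).hasDerivWithinAt)
      (fun t _ => mem_univ _)
      (hg_cont.continuousOn)
      (fun t _ => (hg' t).hasDerivWithinAt)
      (fun t _ => mem_univ _)
      hg0.symm
    exact key ⟨hb, le_rfl⟩
  -- limits
  have hElim : Tendsto E atTop atTop := by
    apply Tendsto.const_mul_atTop hA
    exact Real.tendsto_exp_atTop.comp (Tendsto.const_mul_atTop (by linarith) tendsto_id)
  have h2lim : Tendsto (fun t => 2 / (E t + 1)) atTop (nhds 0) :=
    Tendsto.div_atTop tendsto_const_nhds (hElim.atTop_add tendsto_const_nhds)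
  have hylim : Tendsto y atTop (nhds 1) := by
    have heq2 : ∀ t, y t = 1 - 2 / (E t + 1) := by
      intro t
      rw [hy_def]
      have := (hden t).ne'
      field_simp
      ring
    have := tendsto_const_nhds.sub h2lim (f := fun _ : ℝ => (1:ℝ))
    simp only [sub_zero] at this
    exact Tendsto.congr (fun t => (heq2 t).symm) this
  have hglim : Tendsto g atTop (nhds (π / 2)) := by
    have := (Real.continuous_arcsin.tendsto 1).comp hylim
    rwa [Real.arcsin_one] at this
  have hev : α₂ =ᶠ[atTop] g := by
    filter_upwards [eventually_ge_atTop (0:ℝ)] with t ht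
    exact heq t ht
  constructor
  · have hsinlim : Tendsto (fun t => Real.sin (g t)) atTop (nhds 1) :=
      Tendsto.congr (fun t => (hsin_g t).symm) hylim
    exact hsinlim.congr' (by filter_upwards [hev] with t ht; rw [ht])
  · exact hglim.congr' (by filter_upwards [hev] with t ht; rw [ht])
end

section
/- Let μ₂ > 0 and let α₂ : ℝ → ℝ be a differentiable function satisfying α₂'(t) = μ₂ · cos(α₂(t)) for all t ≥ 0, with α₂(0) ∈ (-π/2, π/2). Then for all t ≥ 0, 1 - sin(α₂(t)) ≤ 2 · exp(-2(μ₂ t + artanh(sin(α₂(0))))); in particular sin(α₂(t)) converges to 1 exponentially fast, with higher gain μ₂ yielding faster convergence. -/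
open Real Set

/-- Under the constant bearing steering control, `sin (α₂ t)` converges to `1`
exponentially fast, with rate proportional to the gain `μ₂`. -/
theorem bearing_exponential_convergence
    (μ₂ : ℝ) (hμ₂ : 0 < μ₂) (α₂ : ℝ → ℝ)
    (hdiff : Differentiable ℝ α₂)
    (hODE : ∀ t : ℝ, 0 ≤ t → HasDerivAt α₂ (μ₂ * Real.cos (α₂ t)) t)
    (h0 : α₂ 0 ∈ Set.Ioo (-(π / 2)) (π / 2)) :
    ∀ t : ℝ, 0 ≤ t →
      1 - Real.sin (α₂ t) ≤
        2 * Real.exp (-2 * (μ₂ * t + _root_.artanh (Real.sin (α₂ 0)))) := by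
  set g : ℝ → ℝ := fun s => Real.sin (α₂ s) with hgdef
  -- bounds on g 0
  have hπ : (0:ℝ) < π / 2 := by positivity
  have hg0_lt : g 0 < 1 := by
    have := Real.sin_lt_sin_of_lt_of_le_pi_div_two (x := α₂ 0) (y := π/2)
      (by linarith [h0.1]) (le_refl _) h0.2
    simpa [Real.sin_pi_div_two] using this
  have hg0_gt : -1 < g 0 := by
    have := Real.sin_lt_sin_of_lt_of_le_pi_div_two (x := -(π/2)) (y := α₂ 0)
      (le_refl _) (le_of_lt h0.2) h0.1
    simpa [Real.sin_pi_div_two] using this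
  -- derivative of g
  have hg : ∀ t : ℝ, 0 ≤ t → HasDerivAt g (μ₂ * (1 - g t ^ 2)) t := by
    intro t ht
    have h1 := (Real.hasDerivAt_sin (α₂ t)).comp t (hODE t ht)
    have : Real.cos (α₂ t) * (μ₂ * Real.cos (α₂ t)) = μ₂ * (1 - g t ^ 2) := by
      have := Real.cos_sq' (α₂ t)
      simp only [hgdef]; nlinarith [Real.cos_sq' (α₂ t)]
    rw [this] at h1; exact h1
  have hgcont : Continuous g := Real.continuous_sin.comp hdiff.continuous
  -- g is monotone on [0, ∞)
  have hmono : MonotoneOn g (Ici 0) := by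
    apply monotoneOn_of_deriv_nonneg (convex_Ici 0) (hgcont.continuousOn)
    · intro t ht
      exact ((hg t (le_of_lt (by simpa using ht))).differentiableAt).differentiableWithinAt
    · intro t ht
      have ht' : (0:ℝ) ≤ t := le_of_lt (by simpa using ht)
      rw [(hg t ht').deriv]
      have : g t ^ 2 ≤ 1 := by
        simpa [hgdef] using Real.sin_sq_le_one (α₂ t)
      nlinarith
  have hpos : ∀ t : ℝ, 0 ≤ t → 0 < 1 + g t := by
    intro t ht
    have := hmono (self_mem_Ici) (mem_Ici.mpr ht) ht
    linarith
  have hle1 : ∀ t : ℝ, g t ≤ 1 := fun t => Real.sin_le_one _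
  -- φ = (1-g)/(1+g)
  set φ : ℝ → ℝ := fun s => (1 - g s) / (1 + g s) with hφdef
  have hφderiv : ∀ t : ℝ, 0 ≤ t → HasDerivAt φ (-2 * μ₂ * φ t) t := by
    intro t ht
    have hne : 1 + g t ≠ 0 := ne_of_gt (hpos t ht)
    have hnum : HasDerivAt (fun s => 1 - g s) (-(μ₂ * (1 - g t ^ 2))) t := by
      have h' := (hasDerivAt_const t (1:ℝ)).sub (hg t ht)
      simp only [zero_sub] at h'; exact h'
    have hden : HasDerivAt (fun s => 1 + g s) (μ₂ * (1 - g t ^ 2)) t := by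
      have h' := (hasDerivAt_const t (1:ℝ)).add (hg t ht)
      simp only [zero_add] at h'; exact h'
    have h : HasDerivAt φ _ t := hnum.div hden hne
    convert h using 1
    rw [hφdef]
    field_simp
    ring
  -- ψ = φ * exp(2 μ₂ t) is constant on [0, ∞)
  set ψ : ℝ → ℝ := fun s => φ s * Real.exp (2 * μ₂ * s) with hψdef
  have hψderiv : ∀ t : ℝ, 0 ≤ t → HasDerivAt ψ 0 t := by
    intro t ht
    have he : HasDerivAt (fun s : ℝ => Real.exp (2 * μ₂ * s))
        (Real.exp (2 * μ₂ * t) * (2 * μ₂)) t := by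
      simpa using ((hasDerivAt_id t).const_mul (2 * μ₂)).exp
    have h : HasDerivAt ψ _ t := (hφderiv t ht).mul he
    convert h using 1
    ring
  have hψconst : ∀ t : ℝ, 0 ≤ t → ψ t = ψ 0 := by
    intro t ht
    have hcont : ContinuousOn ψ (Icc 0 t) := by
      apply ContinuousOn.mul
      · apply ContinuousOn.div
        · exact (continuous_const.sub hgcont).continuousOn
        · exact (continuous_const.add hgcont).continuousOn
        · intro x hx; exact ne_of_gt (hpos x hx.1)
      · exact (Real.continuous_exp.comp (continuous_const.mul continuous_id)).continuousOn
    have hd : ∀ x ∈ Ico (0:ℝ) t, HasDerivWithinAt ψ 0 (Ici x) x := by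
      intro x hx
      exact (hψderiv x hx.1).hasDerivWithinAt
    exact constant_of_has_deriv_right_zero hcont hd t (mem_Icc.mpr ⟨ht, le_refl t⟩)
  -- conclusion
  intro t ht
  have hψ := hψconst t ht
  have hexp_pos : (0:ℝ) < Real.exp (2 * μ₂ * t) := Real.exp_pos _
  have hφt : φ t = φ 0 * Real.exp (-(2 * μ₂ * t)) := by
    have : φ t * Real.exp (2 * μ₂ * t) = φ 0 := by simpa [hψdef] using hψ
    rw [Real.exp_neg]
    field_simp at this ⊢
    linarith [this]
  -- φ 0 = exp (-2 * artanh (g 0))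
  have hφ0 : φ 0 = Real.exp (-2 * _root_.artanh (g 0)) := by
    have hr : (0:ℝ) < (1 + g 0) / (1 - g 0) := by
      apply div_pos <;> linarith
    have : Real.exp (-2 * _root_.artanh (g 0)) = ((1 + g 0) / (1 - g 0))⁻¹ := by
      rw [_root_.artanh]
      rw [show -2 * ((1:ℝ)/2 * Real.log ((1 + g 0)/(1 - g 0))) =
        -Real.log ((1 + g 0)/(1 - g 0)) by ring]
      rw [Real.exp_neg, Real.exp_log hr]
    rw [this, hφdef]
    rw [inv_div]
  have hRHS : 2 * Real.exp (-2 * (μ₂ * t + _root_.artanh (g 0))) = 2 * φ t := by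
    rw [hφt, hφ0, ← Real.exp_add]
    ring_nf
  have hφt_nonneg : 0 ≤ φ t := by
    apply div_nonneg
    · linarith [hle1 t]
    · linarith [hpos t ht]
  have hkey : 1 - g t ≤ 2 * φ t := by
    have h1 : 1 - g t = (1 + g t) * φ t := by
      rw [hφdef]; field_simp [ne_of_gt (hpos t ht)]
    rw [h1]
    have : 1 + g t ≤ 2 := by linarith [hle1 t]
    nlinarith
  calc 1 - g t ≤ 2 * φ t := hkey
    _ = 2 * Real.exp (-2 * (μ₂ * t + _root_.artanh (g 0))) := hRHS.symm
end

section
/- Let v₁ > 0, μ₁ > 0, ρ₀ > 0, let g : (0,∞) → ℝ be C² with derivative f = g', and let (ρ, α₁) : [0,∞) → (0,∞) × ℝ be a differentiable solution of the reduced shape dynamics ρ' = -v₁ cos α₁, α₁' = -μ₁ cos α₁ + v₁ f(ρ). Then the function V₁(t) = 1 + sin(α₁(t)) + g(ρ(t)) is differentiable with V₁'(t) = -μ₁ cos²(α₁(t)) ≤ 0 for all t ≥ 0. -/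
open Real Set

/-- Along solutions of the reduced shape dynamics under the ideal speed control,
the Lyapunov function `V₁ = 1 + sin α₁ + g ∘ ρ` has derivative `-μ₁ cos² α₁ ≤ 0`. -/
theorem lyapunov_derivative_ideal
    (v₁ μ₁ ρ₀ : ℝ) (hv₁ : 0 < v₁) (hμ₁ : 0 < μ₁) (hρ₀ : 0 < ρ₀)
    (g f : ℝ → ℝ)
    (hg : ContDiffOn ℝ 2 g (Set.Ioi 0))
    (hf : ∀ x ∈ Set.Ioi (0 : ℝ), HasDerivAt g (f x) x)
    (ρ α₁ : ℝ → ℝ)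
    (hρpos : ∀ t : ℝ, 0 ≤ t → ρ t ∈ Set.Ioi (0 : ℝ))
    (hρ' : ∀ t : ℝ, 0 ≤ t → HasDerivAt ρ (-(v₁ * Real.cos (α₁ t))) t)
    (hα₁' : ∀ t : ℝ, 0 ≤ t →
      HasDerivAt α₁ (-(μ₁ * Real.cos (α₁ t)) + v₁ * f (ρ t)) t) :
    ∀ t : ℝ, 0 ≤ t →
      HasDerivAt (fun s => 1 + Real.sin (α₁ s) + g (ρ s))
        (-(μ₁ * Real.cos (α₁ t) ^ 2)) t ∧
      -(μ₁ * Real.cos (α₁ t) ^ 2) ≤ 0 := by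
  intro t ht
  have h1 : HasDerivAt (fun s => Real.sin (α₁ s))
      (Real.cos (α₁ t) * (-(μ₁ * Real.cos (α₁ t)) + v₁ * f (ρ t))) t :=
    (Real.hasDerivAt_sin (α₁ t)).comp t (hα₁' t ht)
  have h2 : HasDerivAt (fun s => g (ρ s))
      (f (ρ t) * -(v₁ * Real.cos (α₁ t))) t :=
    (hf (ρ t) (hρpos t ht)).comp t (hρ' t ht)
  constructor
  · have h := (h1.add h2).const_add 1
    simp only [Pi.add_apply, ← add_assoc] at h
    refine h.congr_deriv ?_
    ring
  · have : 0 ≤ μ₁ * Real.cos (α₁ t) ^ 2 :=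
      mul_nonneg hμ₁.le (sq_nonneg _)
    linarith
end

section
/- Let v₁ > 0, μ₁ > 0, ρ₀ > 0, let g : (0,∞) → ℝ be C² with g(ρ₀) = 0, g(ρ) > 0 for ρ ≠ ρ₀, g(ρ) → ∞ as ρ → 0⁺ and as ρ → ∞, and f = g'. Let (ρ, α₁) : [0,∞) → (0,∞) × ℝ be a solution of ρ' = -v₁ cos α₁, α₁' = -μ₁ cos α₁ + v₁ f(ρ) with 1 + sin(α₁(0)) + g(ρ(0)) < 2. Then 1 + sin(α₁(t)) + g(ρ(t)) < 2 for all t ≥ 0, and there exist constants 0 < m ≤ M such that m ≤ ρ(t) ≤ M for all t ≥ 0; in particular the solution remains in a compact subset of (0,∞) × ℝ. -/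
open Real Set Filter

/-- The sublevel set `{V₁ < 2}` of the Lyapunov function is forward invariant, and
solutions starting in it have `ρ` confined to a compact interval `[m, M] ⊆ (0, ∞)`. -/
theorem sublevel_set_invariant_and_rho_bounded
    (v₁ μ₁ ρ₀ : ℝ) (hv₁ : 0 < v₁) (hμ₁ : 0 < μ₁) (hρ₀ : 0 < ρ₀)
    (g f : ℝ → ℝ)
    (hg : ContDiffOn ℝ 2 g (Set.Ioi 0))
    (hg0 : g ρ₀ = 0)
    (hgpos : ∀ x ∈ Set.Ioi (0 : ℝ), x ≠ ρ₀ → 0 < g x)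
    (hglim0 : Filter.Tendsto g (nhdsWithin 0 (Set.Ioi 0)) Filter.atTop)
    (hglimtop : Filter.Tendsto g Filter.atTop Filter.atTop)
    (hf : ∀ x ∈ Set.Ioi (0 : ℝ), HasDerivAt g (f x) x)
    (ρ α₁ : ℝ → ℝ)
    (hρpos : ∀ t : ℝ, 0 ≤ t → ρ t ∈ Set.Ioi (0 : ℝ))
    (hρ' : ∀ t : ℝ, 0 ≤ t → HasDerivAt ρ (-(v₁ * Real.cos (α₁ t))) t)
    (hα₁' : ∀ t : ℝ, 0 ≤ t →
      HasDerivAt α₁ (-(μ₁ * Real.cos (α₁ t)) + v₁ * f (ρ t)) t)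
    (hV0 : 1 + Real.sin (α₁ 0) + g (ρ 0) < 2) :
    (∀ t : ℝ, 0 ≤ t → 1 + Real.sin (α₁ t) + g (ρ t) < 2) ∧
      ∃ m M : ℝ, 0 < m ∧ m ≤ M ∧ ∀ t : ℝ, 0 ≤ t → m ≤ ρ t ∧ ρ t ≤ M := by

  set V : ℝ → ℝ := fun t => Real.sin (α₁ t) + g (ρ t) with hVdef
  have hVderiv : ∀ t : ℝ, 0 ≤ t → HasDerivAt V (-(μ₁ * Real.cos (α₁ t) ^ 2)) t := by
    intro t ht
    have h1 : HasDerivAt (fun s => Real.sin (α₁ s))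
        (Real.cos (α₁ t) * (-(μ₁ * Real.cos (α₁ t)) + v₁ * f (ρ t))) t :=
      (Real.hasDerivAt_sin (α₁ t)).comp t (hα₁' t ht)
    have h2 : HasDerivAt (fun s => g (ρ s))
        (f (ρ t) * (-(v₁ * Real.cos (α₁ t)))) t :=
      (hf (ρ t) (hρpos t ht)).comp t (hρ' t ht)
    have h3 := h1.add h2
    exact h3.congr_deriv (by ring)
  have hanti : AntitoneOn V (Set.Ici 0) := by
    apply antitoneOn_of_deriv_nonpos (convex_Ici 0)
    · intro t ht
      exact (hVderiv t ht).continuousAt.continuousWithinAt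
    · intro t ht
      rw [interior_Ici] at ht
      exact (hVderiv t ht.le).differentiableAt.differentiableWithinAt
    · intro t ht
      rw [interior_Ici] at ht
      rw [(hVderiv t ht.le).deriv]
      nlinarith [sq_nonneg (Real.cos (α₁ t))]
  have hVle : ∀ t : ℝ, 0 ≤ t → V t ≤ V 0 := fun t ht =>
    hanti (Set.self_mem_Ici) ht ht
  have hV0' : V 0 = Real.sin (α₁ 0) + g (ρ 0) := rfl
  constructor
  · intro t ht
    have := hVle t ht
    have hVt : V t = Real.sin (α₁ t) + g (ρ t) := rfl
    linarith
  · set c : ℝ := V 0 + 1 with hc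
    have hgc : ∀ t : ℝ, 0 ≤ t → g (ρ t) ≤ c := by
      intro t ht
      have h1 := hVle t ht
      have h2 := Real.neg_one_le_sin (α₁ t)
      have hVt : V t = Real.sin (α₁ t) + g (ρ t) := rfl
      linarith
    have h0 := hglim0.eventually (Filter.eventually_gt_atTop c)
    rw [Filter.Eventually, mem_nhdsGT_iff_exists_Ioo_subset] at h0
    obtain ⟨u, hu, hsub⟩ := h0
    obtain ⟨N, hN⟩ := Filter.eventually_atTop.mp (hglimtop.eventually (Filter.eventually_gt_atTop c))
    have hb : ∀ t : ℝ, 0 ≤ t → u ≤ ρ t ∧ ρ t ≤ N := by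
      intro t ht
      constructor
      · by_contra h
        push_neg at h
        have : c < g (ρ t) := hsub ⟨hρpos t ht, h⟩
        linarith [hgc t ht]
      · by_contra h
        push_neg at h
        have : c < g (ρ t) := hN (ρ t) h.le
        linarith [hgc t ht]
    exact ⟨u, N, hu, le_trans (hb 0 le_rfl).1 (hb 0 le_rfl).2, hb⟩
end

section
/- (Proposition 1, Lyapunov stability) Let v₁ > 0, μ₁ > 0, ρ₀ > 0, let g : (0,∞) → ℝ be C² with g(ρ₀) = 0, g(ρ) > 0 for ρ ≠ ρ₀, g(ρ) → ∞ as ρ → 0⁺ and as ρ → ∞, and f = g'. Then for every ε > 0 there exists δ > 0 such that every solution (ρ, α₁) : [0,∞) → (0,∞) × ℝ of ρ' = -v₁ cos α₁, α₁' = -μ₁ cos α₁ + v₁ f(ρ) with |ρ(0) - ρ₀| + |α₁(0) + π/2| < δ satisfies |ρ(t) - ρ₀| + |α₁(t) + π/2| < ε for all t ≥ 0. -/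
open Real Set

/-- If `a + π/2` is nonzero and has absolute value less than `π`, then `sin a > -1`. -/
lemma aux_sin_add_one_pos {a : ℝ} (h1 : a + π / 2 ≠ 0) (h2 : |a + π / 2| < π) :
    0 < Real.sin a + 1 := by
  have hb : Real.sin a = -Real.cos (a + π / 2) := by
    rw [← Real.sin_sub_pi_div_two]; ring_nf
  rw [hb]
  have hπ : (0 : ℝ) < π := Real.pi_pos
  have h2' := abs_lt.1 h2
  have hlt : Real.cos (a + π / 2) < 1 := by
    refine lt_of_le_of_ne (Real.cos_le_one _) fun hc => h1 ?_
    exact (Real.cos_eq_one_iff_of_lt_of_lt (by linarith) (by linarith)).1 hc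
  linarith

set_option maxHeartbeats 1000000 in
/-- Proposition 1 (Lyapunov stability): the equilibrium `(ρ₀, -π/2)` of the
closed-loop reduced shape dynamics is Lyapunov stable. -/
theorem prop1_lyapunov_stability
    (v₁ μ₁ ρ₀ : ℝ) (hv₁ : 0 < v₁) (hμ₁ : 0 < μ₁) (hρ₀ : 0 < ρ₀)
    (g f : ℝ → ℝ)
    (hg : ContDiffOn ℝ 2 g (Set.Ioi 0))
    (hg0 : g ρ₀ = 0)
    (hgpos : ∀ x ∈ Set.Ioi (0 : ℝ), x ≠ ρ₀ → 0 < g x)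
    (hglim0 : Filter.Tendsto g (nhdsWithin 0 (Set.Ioi 0)) Filter.atTop)
    (hglimtop : Filter.Tendsto g Filter.atTop Filter.atTop)
    (hf : ∀ x ∈ Set.Ioi (0 : ℝ), HasDerivAt g (f x) x) :
    ∀ ε > (0 : ℝ), ∃ δ > (0 : ℝ),
      ∀ ρ α₁ : ℝ → ℝ,
        (∀ t : ℝ, 0 ≤ t → ρ t ∈ Set.Ioi (0 : ℝ)) →
        (∀ t : ℝ, 0 ≤ t → HasDerivAt ρ (-(v₁ * Real.cos (α₁ t))) t) →
        (∀ t : ℝ, 0 ≤ t →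
          HasDerivAt α₁ (-(μ₁ * Real.cos (α₁ t)) + v₁ * f (ρ t)) t) →
        |ρ 0 - ρ₀| + |α₁ 0 + π / 2| < δ →
        ∀ t : ℝ, 0 ≤ t → |ρ t - ρ₀| + |α₁ t + π / 2| < ε := by
  intro ε hε
  have hπ : (0 : ℝ) < π := Real.pi_pos
  -- shrink ε
  set ε' : ℝ := min ε (min ρ₀ π) / 2 with hε'def
  have hεmin : 0 < min ε (min ρ₀ π) := lt_min hε (lt_min hρ₀ hπ)
  have hε'pos : 0 < ε' := by positivity
  have hε'ε : ε' < ε := by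
    have h1 : min ε (min ρ₀ π) ≤ ε := min_le_left _ _
    simp only [hε'def]; linarith
  have hε'ρ : ε' < ρ₀ := by
    have h1 : min ε (min ρ₀ π) ≤ ρ₀ := le_trans (min_le_right _ _) (min_le_left _ _)
    simp only [hε'def]; linarith
  have hε'π : ε' < π := by
    have h1 : min ε (min ρ₀ π) ≤ π := le_trans (min_le_right _ _) (min_le_right _ _)
    simp only [hε'def]; linarith
  -- the Lyapunov function on the plane and the "boundary" set K
  set φ : ℝ × ℝ → ℝ := fun p => g p.1 + Real.sin p.2 + 1 with hφdef
  set K : Set (ℝ × ℝ) := {p | |p.1 - ρ₀| + |p.2 + π / 2| = ε'} with hKdef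
  have hgc : ContinuousOn g (Ioi 0) := fun x hx =>
    (hf x hx).continuousAt.continuousWithinAt
  have hKmaps : MapsTo Prod.fst K (Ioi 0) := by
    intro p hp
    have hp' : |p.1 - ρ₀| + |p.2 + π / 2| = ε' := hp
    have h2 := abs_nonneg (p.2 + π / 2)
    have h1 : |p.1 - ρ₀| ≤ ε' := by linarith
    have h1' := (abs_le.1 h1).1
    simp only [mem_Ioi]
    linarith
  have hφc : ContinuousOn φ K := by
    refine ContinuousOn.add (ContinuousOn.add ?_ ?_) continuousOn_const
    · exact hgc.comp continuous_fst.continuousOn hKmaps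
    · exact (Real.continuous_sin.comp continuous_snd).continuousOn
  -- K is compact and nonempty
  have hKclosed : IsClosed K := by
    have : K = (fun p : ℝ × ℝ => |p.1 - ρ₀| + |p.2 + π / 2|) ⁻¹' {ε'} := rfl
    rw [this]
    exact IsClosed.preimage (by continuity) isClosed_singleton
  have hKsub : K ⊆ Metric.closedBall (ρ₀, -(π / 2)) ε' := by
    intro p hp
    have hp' : |p.1 - ρ₀| + |p.2 + π / 2| = ε' := hp
    have h2 := abs_nonneg (p.2 + π / 2)
    have h1 := abs_nonneg (p.1 - ρ₀)
    rw [Metric.mem_closedBall, Prod.dist_eq]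
    have hd1 : dist p.1 ρ₀ = |p.1 - ρ₀| := Real.dist_eq _ _
    have hd2 : dist p.2 (-(π / 2)) = |p.2 + π / 2| := by
      rw [Real.dist_eq, sub_neg_eq_add]
    rw [hd1, hd2]
    exact max_le (by linarith) (by linarith)
  have hKcomp : IsCompact K :=
    (isCompact_closedBall _ _).of_isClosed_subset hKclosed hKsub
  have hKne : K.Nonempty := by
    refine ⟨(ρ₀ + ε', -(π / 2)), ?_⟩
    show |ρ₀ + ε' - ρ₀| + |-(π / 2) + π / 2| = ε'
    simp [abs_of_nonneg hε'pos.le]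
  -- the minimum c of φ on K is positive
  obtain ⟨p₀, hp₀K, hp₀⟩ := hKcomp.exists_isMinOn hKne hφc
  rw [isMinOn_iff] at hp₀
  set c : ℝ := φ p₀ with hcdef
  have hposK : ∀ p ∈ K, 0 < φ p := by
    intro p hp
    have hp' : |p.1 - ρ₀| + |p.2 + π / 2| = ε' := hp
    have hp1pos : p.1 ∈ Ioi (0 : ℝ) := hKmaps hp
    by_cases hp1 : p.1 = ρ₀
    · have h0 : |p.1 - ρ₀| = 0 := by rw [hp1]; simp
      have h2 : |p.2 + π / 2| = ε' := by linarith
      have hne : p.2 + π / 2 ≠ 0 := by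
        intro hc; rw [hc] at h2; simp at h2; linarith
      have hlt : |p.2 + π / 2| < π := by rw [h2]; exact hε'π
      have := aux_sin_add_one_pos hne hlt
      simp only [hφdef, hp1, hg0]
      linarith
    · have hgp := hgpos p.1 hp1pos hp1
      have hs := Real.neg_one_le_sin p.2
      simp only [hφdef]
      linarith
  have hcpos : 0 < c := hposK p₀ hp₀K
  -- continuity of φ at the equilibrium gives δ₀
  have hφ0 : φ (ρ₀, -(π / 2)) = 0 := by
    simp only [hφdef, Real.sin_neg, Real.sin_pi_div_two, hg0]
    ring
  have hφct : ContinuousAt φ (ρ₀, -(π / 2)) := by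
    refine ContinuousAt.add (ContinuousAt.add ?_ ?_) continuousAt_const
    · exact ((hf ρ₀ (mem_Ioi.2 hρ₀)).continuousAt).comp continuousAt_fst
    · exact Real.continuous_sin.continuousAt.comp continuousAt_snd
  obtain ⟨δ₀, hδ₀pos, hδ₀⟩ := Metric.continuousAt_iff.1 hφct c hcpos
  -- the final δ
  refine ⟨min δ₀ ε', lt_min hδ₀pos hε'pos, ?_⟩
  intro ρ α₁ hρpos hρ' hα' hinit t ht
  have hinit' : |ρ 0 - ρ₀| + |α₁ 0 + π / 2| < δ₀ :=
    lt_of_lt_of_le hinit (min_le_left _ _)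
  have hinitε : |ρ 0 - ρ₀| + |α₁ 0 + π / 2| < ε' :=
    lt_of_lt_of_le hinit (min_le_right _ _)
  -- the Lyapunov function along the solution
  set V : ℝ → ℝ := fun s => g (ρ s) + Real.sin (α₁ s) + 1 with hVdef
  have hV : ∀ s, 0 ≤ s → HasDerivAt V (-(μ₁ * Real.cos (α₁ s) ^ 2)) s := by
    intro s hs
    have h1 : HasDerivAt (fun u => g (ρ u)) (f (ρ s) * -(v₁ * Real.cos (α₁ s))) s :=
      (hf (ρ s) (hρpos s hs)).comp s (hρ' s hs)
    have h2 : HasDerivAt (fun u => Real.sin (α₁ u))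
        (Real.cos (α₁ s) * (-(μ₁ * Real.cos (α₁ s)) + v₁ * f (ρ s))) s :=
      (Real.hasDerivAt_sin (α₁ s)).comp s (hα' s hs)
    have h3 : HasDerivAt V (f (ρ s) * -(v₁ * Real.cos (α₁ s)) +
        Real.cos (α₁ s) * (-(μ₁ * Real.cos (α₁ s)) + v₁ * f (ρ s))) s :=
      (h1.add h2).add_const 1
    convert h3 using 1
    ring
  have hVcont : ContinuousOn V (Ici 0) := fun s hs =>
    (hV s hs).continuousAt.continuousWithinAt
  have hVanti : AntitoneOn V (Ici 0) := by
    refine antitoneOn_of_deriv_nonpos (convex_Ici 0) hVcont ?_ ?_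
    · intro x hx
      rw [interior_Ici] at hx
      exact (hV x (le_of_lt hx)).differentiableAt.differentiableWithinAt
    · intro x hx
      rw [interior_Ici] at hx
      rw [(hV x (le_of_lt hx)).deriv]
      have := sq_nonneg (Real.cos (α₁ x))
      nlinarith
  -- V 0 < c
  have hV0 : V 0 < c := by
    have hab1 := abs_nonneg (ρ 0 - ρ₀)
    have hab2 := abs_nonneg (α₁ 0 + π / 2)
    have hd : dist ((ρ 0, α₁ 0) : ℝ × ℝ) (ρ₀, -(π / 2)) < δ₀ := by
      rw [Prod.dist_eq]
      have hd1 : dist (ρ 0) ρ₀ = |ρ 0 - ρ₀| := Real.dist_eq _ _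
      have hd2 : dist (α₁ 0) (-(π / 2)) = |α₁ 0 + π / 2| := by
        rw [Real.dist_eq, sub_neg_eq_add]
      rw [hd1, hd2]
      exact max_lt (by linarith) (by linarith)
    have := hδ₀ hd
    rw [hφ0, Real.dist_eq, sub_zero] at this
    have := (abs_lt.1 this).2
    simpa [hφdef, hVdef] using this
  -- the distance function along the solution
  set W : ℝ → ℝ := fun s => |ρ s - ρ₀| + |α₁ s + π / 2| with hWdef
  have hWcont : ∀ s, 0 ≤ s → ContinuousAt W s := by
    intro s hs
    exact (((hρ' s hs).continuousAt.sub continuousAt_const).abs.add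
      ((hα' s hs).continuousAt.add continuousAt_const).abs)
  -- main claim: W stays below ε'
  have hclaim : W t < ε' := by
    by_contra hcon
    push_neg at hcon
    set S : Set ℝ := {s | 0 ≤ s ∧ ε' ≤ W s} with hSdef
    have hSne : S.Nonempty := ⟨t, ht, hcon⟩
    have hSbdd : BddBelow S := ⟨0, fun x hx => hx.1⟩
    have hSclosed : IsClosed S := by
      have hWc : ContinuousOn W (Ici 0) := fun s hs =>
        (hWcont s hs).continuousWithinAt
      have : S = Ici 0 ∩ W ⁻¹' (Ici ε') := by
        ext x; simp [hSdef, mem_Ici]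
      rw [this]
      exact hWc.preimage_isClosed_of_isClosed isClosed_Ici isClosed_Ici
    have hmem : sInf S ∈ S := hSclosed.csInf_mem hSne hSbdd
    set s₀ : ℝ := sInf S with hs₀def
    have hs₀nonneg : 0 ≤ s₀ := hmem.1
    have hs₀W : ε' ≤ W s₀ := hmem.2
    have hs₀pos : 0 < s₀ := by
      rcases lt_or_eq_of_le hs₀nonneg with h | h
      · exact h
      · exfalso
        have : W 0 < ε' := hinitε
        rw [← h] at hs₀W
        linarith
    have hbefore : ∀ u, 0 ≤ u → u < s₀ → W u < ε' := by
      intro u hu hus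
      by_contra hcu
      push_neg at hcu
      have : s₀ ≤ u := csInf_le hSbdd ⟨hu, hcu⟩
      linarith
    -- left limit: W s₀ ≤ ε'
    have hle : W s₀ ≤ ε' := by
      have htend : Filter.Tendsto W (nhdsWithin s₀ (Iio s₀)) (nhds (W s₀)) :=
        ((hWcont s₀ hs₀nonneg).tendsto).mono_left nhdsWithin_le_nhds
      have hev : ∀ᶠ u in nhdsWithin s₀ (Iio s₀), W u ≤ ε' := by
        have hIoo : Ioo 0 s₀ ∈ nhdsWithin s₀ (Iio s₀) :=
          Ioo_mem_nhdsLT_of_mem ⟨hs₀pos, le_refl _⟩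
        filter_upwards [hIoo] with u hu
        exact (hbefore u hu.1.le hu.2).le
      exact le_of_tendsto htend hev
    have hWeq : W s₀ = ε' := le_antisymm hle hs₀W
    -- then (ρ s₀, α₁ s₀) ∈ K, so c ≤ V s₀ ≤ V 0 < c, contradiction
    have hKm : ((ρ s₀, α₁ s₀) : ℝ × ℝ) ∈ K := hWeq
    have h1 : c ≤ V s₀ := hp₀ _ hKm
    have h2 : V s₀ ≤ V 0 := hVanti (self_mem_Ici) hs₀nonneg hs₀nonneg
    linarith
  calc |ρ t - ρ₀| + |α₁ t + π / 2| = W t := rfl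
    _ < ε' := hclaim
    _ < ε := hε'ε
end

section
/- Let v₁ > 0, μ₁ > 0, k_u ≥ 0, let g : (0,∞) → ℝ be C² with derivative f = g', let u₁ : [0,∞) → ℝ be continuous with |u₁(t)| ≤ k_u for all t, and let (ρ, α₁) be a solution of ρ' = -v₁ cos α₁, α₁' = -u₁(t) - μ₁ cos α₁ + v₁ f(ρ). Then V₁(t) = 1 + sin(α₁(t)) + g(ρ(t)) satisfies V₁'(t) ≤ -μ₁ cos²(α₁(t)) + k_u·|cos(α₁(t))| for all t ≥ 0; in particular, at every time t with |cos(α₁(t))| ≥ k_u/μ₁ one has V₁'(t) ≤ 0. -/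
open Real Set

/-- With a bounded perturbation `|u₁| ≤ k_u`, the Lyapunov derivative satisfies
`V₁' ≤ -μ₁ cos² α₁ + k_u |cos α₁|`; in particular `V₁' ≤ 0` whenever
`|cos α₁| ≥ k_u / μ₁`. -/
theorem lyapunov_derivative_bound_perturbed
    (v₁ μ₁ k_u : ℝ) (hv₁ : 0 < v₁) (hμ₁ : 0 < μ₁) (hk_u : 0 ≤ k_u)
    (g f : ℝ → ℝ)
    (hg : ContDiffOn ℝ 2 g (Set.Ioi 0))
    (hf : ∀ x ∈ Set.Ioi (0 : ℝ), HasDerivAt g (f x) x)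
    (u₁ : ℝ → ℝ) (hu₁ : Continuous u₁)
    (hu₁bdd : ∀ t : ℝ, 0 ≤ t → |u₁ t| ≤ k_u)
    (ρ α₁ : ℝ → ℝ)
    (hρpos : ∀ t : ℝ, 0 ≤ t → ρ t ∈ Set.Ioi (0 : ℝ))
    (hρ' : ∀ t : ℝ, 0 ≤ t → HasDerivAt ρ (-(v₁ * Real.cos (α₁ t))) t)
    (hα₁' : ∀ t : ℝ, 0 ≤ t →
      HasDerivAt α₁ (-(u₁ t) - μ₁ * Real.cos (α₁ t) + v₁ * f (ρ t)) t) :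
    ∀ t : ℝ, 0 ≤ t →
      deriv (fun s => 1 + Real.sin (α₁ s) + g (ρ s)) t ≤
        -(μ₁ * Real.cos (α₁ t) ^ 2) + k_u * |Real.cos (α₁ t)| ∧
      (k_u / μ₁ ≤ |Real.cos (α₁ t)| →
        deriv (fun s => 1 + Real.sin (α₁ s) + g (ρ s)) t ≤ 0) := by
  intro t ht
  have hV : HasDerivAt (fun s => 1 + Real.sin (α₁ s) + g (ρ s))
      (-(u₁ t) * Real.cos (α₁ t) - μ₁ * Real.cos (α₁ t) ^ 2) t := by
    have h1 : HasDerivAt (fun s => Real.sin (α₁ s))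
        (Real.cos (α₁ t) * (-(u₁ t) - μ₁ * Real.cos (α₁ t) + v₁ * f (ρ t))) t :=
      (Real.hasDerivAt_sin (α₁ t)).comp t (hα₁' t ht)
    have h2 : HasDerivAt (fun s => g (ρ s))
        (f (ρ t) * -(v₁ * Real.cos (α₁ t))) t :=
      (hf (ρ t) (hρpos t ht)).comp t (hρ' t ht)
    have := ((hasDerivAt_const t (1:ℝ)).add h1).add h2
    refine this.congr_deriv ?_
    ring
  have hd : deriv (fun s => 1 + Real.sin (α₁ s) + g (ρ s)) t
      = -(u₁ t) * Real.cos (α₁ t) - μ₁ * Real.cos (α₁ t) ^ 2 := hV.deriv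
  have hb : -(u₁ t) * Real.cos (α₁ t) ≤ k_u * |Real.cos (α₁ t)| := by
    calc -(u₁ t) * Real.cos (α₁ t) ≤ |(-(u₁ t)) * Real.cos (α₁ t)| := le_abs_self _
    _ = |u₁ t| * |Real.cos (α₁ t)| := by rw [abs_mul, abs_neg]
    _ ≤ k_u * |Real.cos (α₁ t)| :=
        mul_le_mul_of_nonneg_right (hu₁bdd t ht) (abs_nonneg _)
  constructor
  · rw [hd]; linarith
  · intro hc
    have h2 : k_u * |Real.cos (α₁ t)| ≤ μ₁ * Real.cos (α₁ t) ^ 2 := by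
      have : k_u ≤ μ₁ * |Real.cos (α₁ t)| := by
        rw [div_le_iff₀ hμ₁] at hc; linarith [hc]
      calc k_u * |Real.cos (α₁ t)| ≤ (μ₁ * |Real.cos (α₁ t)|) * |Real.cos (α₁ t)| :=
            mul_le_mul_of_nonneg_right this (abs_nonneg _)
      _ = μ₁ * Real.cos (α₁ t) ^ 2 := by rw [mul_assoc, ← abs_mul, ← sq, abs_sq]
    rw [hd]; linarith
end

section
/- Let v₁ > 0, μ₁ > 0, ρ₀ > 0, let g : (0,∞) → ℝ be C² with g(ρ₀) = 0, g(ρ) > 0 for ρ ≠ ρ₀, g(ρ) → ∞ as ρ → 0⁺ and as ρ → ∞, f = g', and f'(ρ₀) > 0. There exists δ > 0 such that for every continuous input u₁ : [0,∞) → ℝ with sup_t |u₁(t)| < δ and u₁(t) → 0 as t → ∞, every solution (ρ, α₁) of ρ' = -v₁ cos α₁, α₁' = -u₁(t) - μ₁ cos α₁ + v₁ f(ρ) with |ρ(0) - ρ₀| + |α₁(0) + π/2| < δ satisfies ρ(t) → ρ₀ and α₁(t) → -π/2 as t → ∞. -/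
open Real Set Filter

open Topology

set_option maxHeartbeats 1000000


/-- Grönwall-type comparison: if `P' = D ≤ -c P + K` on `[a,b]` then
`P t ≤ (P a - K/c) e^{-c(t-a)} + K/c`. -/
lemma gron_aux {P D : ℝ → ℝ} {c K a b : ℝ} (hc : 0 < c)
    (hD : ∀ t ∈ Set.Icc a b, HasDerivAt P (D t) t)
    (hle : ∀ t ∈ Set.Icc a b, D t ≤ -c * P t + K) :
    ∀ t ∈ Set.Icc a b, P t ≤ (P a - K / c) * Real.exp (-(c * (t - a))) + K / c := by
  intro t ht
  have hab : a ≤ b := le_trans ht.1 ht.2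
  have hφd : ∀ s ∈ Set.Icc a b, HasDerivAt (fun τ => (P τ - K / c) * Real.exp (c * τ))
      (D s * Real.exp (c * s) + (P s - K / c) * (Real.exp (c * s) * c)) s := by
    intro s hs
    have h1 : HasDerivAt (fun τ : ℝ => c * τ) c s := by
      simpa using (hasDerivAt_id s).const_mul c
    have h2 : HasDerivAt (fun τ : ℝ => Real.exp (c * τ)) (Real.exp (c * s) * c) s :=
      (Real.hasDerivAt_exp (c * s)).comp s h1
    exact ((hD s hs).sub_const _).mul h2
  have hanti : AntitoneOn (fun τ => (P τ - K / c) * Real.exp (c * τ)) (Set.Icc a b) := by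
    apply antitoneOn_of_deriv_nonpos (convex_Icc a b)
    · exact fun s hs => ((hφd s hs).continuousAt).continuousWithinAt
    · intro s hs
      rw [interior_Icc] at hs
      exact ((hφd s (Ioo_subset_Icc_self hs)).differentiableAt).differentiableWithinAt
    · intro s hs
      rw [interior_Icc] at hs
      rw [(hφd s (Ioo_subset_Icc_self hs)).deriv]
      have := hle s (Ioo_subset_Icc_self hs)
      have hK : D s + c * P s - K ≤ 0 := by linarith
      have he := Real.exp_pos (c * s)
      have hKc : (P s - K / c) * c = c * P s - K := by field_simp
      have : D s * Real.exp (c * s) + (P s - K / c) * (Real.exp (c * s) * c)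
          = (D s + c * P s - K) * Real.exp (c * s) := by
        have hc' : c ≠ 0 := ne_of_gt hc
        field_simp
        ring
      rw [this]
      exact mul_nonpos_of_nonpos_of_nonneg hK he.le
  have hφ := hanti (Set.left_mem_Icc.2 hab) ht ht.1
  simp only at hφ
  have h3 := mul_le_mul_of_nonneg_right hφ (Real.exp_pos (-(c * t))).le
  have e1 : Real.exp (c * t) * Real.exp (-(c * t)) = 1 := by
    rw [← Real.exp_add]; norm_num
  have e2 : Real.exp (c * a) * Real.exp (-(c * t)) = Real.exp (-(c * (t - a))) := by
    rw [← Real.exp_add]; congr 1; ring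
  have h4 : (P t - K / c) ≤ (P a - K / c) * Real.exp (-(c * (t - a))) := by
    calc P t - K / c = (P t - K / c) * (Real.exp (c * t) * Real.exp (-(c * t))) := by
          rw [e1]; ring
    _ = (P t - K / c) * Real.exp (c * t) * Real.exp (-(c * t)) := by ring
    _ ≤ (P a - K / c) * Real.exp (c * a) * Real.exp (-(c * t)) := h3
    _ = (P a - K / c) * Real.exp (-(c * (t - a))) := by rw [mul_assoc, e2]
  linarith

lemma gron_max {P D : ℝ → ℝ} {c K a b : ℝ} (hc : 0 < c)
    (hD : ∀ t ∈ Set.Icc a b, HasDerivAt P (D t) t)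
    (hle : ∀ t ∈ Set.Icc a b, D t ≤ -c * P t + K) :
    ∀ t ∈ Set.Icc a b, P t ≤ max (P a) (K / c) := by
  intro t ht
  have h := gron_aux hc hD hle t ht
  have hexp : Real.exp (-(c * (t - a))) ≤ 1 := by
    rw [Real.exp_le_one_iff]
    have : 0 ≤ c * (t - a) := mul_nonneg hc.le (by linarith [ht.1])
    linarith
  have hexp0 := (Real.exp_pos (-(c * (t - a)))).le
  rcases le_total (P a) (K / c) with hle' | hle'
  · have : (P a - K / c) * Real.exp (-(c * (t - a))) ≤ 0 :=
      mul_nonpos_of_nonpos_of_nonneg (by linarith) hexp0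
    exact le_max_of_le_right (by linarith)
  · have : (P a - K / c) * Real.exp (-(c * (t - a))) ≤ P a - K / c := by
      nlinarith
    exact le_max_of_le_left (by linarith)

/-- quadratic lower bound on `1 - cos` for `|β| ≤ 1/2`. -/
lemma quad_cos {β : ℝ} (h : |β| ≤ 1/2) : β ^ 2 / 5 ≤ 1 - Real.cos β := by
  have hπ : |β| ≤ π := le_trans h (by linarith [Real.pi_gt_three])
  have h1 := Real.cos_le_one_sub_mul_cos_sq hπ
  have h2 : (2 : ℝ) / π ^ 2 ≥ 1 / 5 := by
    have h3 := Real.pi_lt_d2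
    have h4 := Real.pi_pos
    rw [ge_iff_le, div_le_div_iff₀ (by norm_num) (by positivity)]
    nlinarith
  nlinarith [sq_nonneg β, Real.pi_pos]


lemma young_aux {th cr mu X S : ℝ} (hth : 0 < th) (h : cr^2 ≤ th*(mu/2)) :
    cr*(X*S) ≤ (th/2)*X^2 + (mu/4)*S^2 := by
  have H : (2*th)*(cr*(X*S)) ≤ (2*th)*((th/2)*X^2 + (mu/4)*S^2) := by
    nlinarith [sq_nonneg (th*X - cr*S), mul_nonneg (sub_nonneg.2 h) (sq_nonneg S)]
  exact le_of_mul_le_mul_left H (by positivity)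

/-- Lower bound for the Lyapunov function in the region. -/
lemma P_lower {k ε x s cb : ℝ} (hk : 0 < k) (hε : 0 < ε) (hε2 : ε ≤ 1/2)
    (hεk : ε ≤ k/2) (hpyth : s^2 + cb^2 = 1) (hcb : 1/2 ≤ cb) (hcb1 : cb ≤ 1) :
    (k/4) * (x*x) + (1/2) * (1 - cb) ≤ (k/2) * (x*x) + (1 - cb) - ε * (x*s) := by
  have hs3 : s^2 ≤ 2*(1-cb) := by nlinarith [sq_nonneg (1-cb)]
  have h1 : x*s ≤ (x*x + s^2)/2 := by nlinarith [sq_nonneg (x-s)]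
  have h2 : ε*(x*s) ≤ ε*((x*x + s^2)/2) := mul_le_mul_of_nonneg_left h1 hε.le
  have h5 : ε*(x*x) ≤ (k/2)*(x*x) := mul_le_mul_of_nonneg_right (by linarith) (mul_self_nonneg x)
  have h6 : ε*s^2 ≤ (1/2)*(2*(1-cb)) :=
    le_trans (mul_le_mul_of_nonneg_right hε2 (sq_nonneg s)) (by linarith [sq_nonneg s])
  linarith

/-- The key pointwise dissipation inequality. -/
lemma key_ineq {v μ k ε η u x s cb F c₀ : ℝ}
    (hv : 0 < v) (hμ : 0 < μ) (hk : 0 < k) (hε : 0 < ε)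
    (hεv : ε*v ≤ μ/4) (hε2 : ε ≤ 1/2)
    (hη0 : 0 ≤ η) (hηk : η ≤ k/2)
    (hcross : 2*(v*η)^2 + 2*(ε*μ)^2 ≤ ε*v*k*μ/8)
    (hc₀1 : c₀ ≤ (ε*v*k)/(8*(k/2+1))) (hc₀2 : c₀ ≤ μ/3) (hc₀0 : 0 ≤ c₀)
    (hcb : 1/2 ≤ cb) (hcb1 : cb ≤ 1) (hpyth : s^2 + cb^2 = 1)
    (hx1 : |x| ≤ 1)
    (hF : |F - k*x| ≤ η*|x|) :
    v*s*(F - k*x) - u*s - μ*s^2 + ε*v*s^2 + ε*u*x*cb + ε*μ*x*s*cb - ε*v*cb*x*F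
      ≤ -c₀ * ((k/2)*(x*x) + (1 - cb) - ε*(x*s)) + 2*|u| := by
  have hcb0 : (0:ℝ) ≤ cb := by linarith
  have hs1 : s^2 ≤ 1 := by nlinarith [sq_nonneg cb]
  have habs_s : |s| ≤ 1 := by
    rw [abs_le]; constructor <;> nlinarith [sq_nonneg (s+1), sq_nonneg (s-1)]
  have habs_cb : |cb| ≤ 1 := by rw [abs_le]; constructor <;> linarith
  -- x * F ≥ (k/2) x²
  have hxF : (k/2)*(x*x) ≤ x*F := by
    have h2 : |x*(F-k*x)| ≤ |x| * (η*|x|) := by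
      rw [abs_mul]; exact mul_le_mul_of_nonneg_left hF (abs_nonneg x)
    have h3 := neg_abs_le (x*(F-k*x))
    have h4 : η*(|x| * |x|) ≤ (k/2)*(|x| * |x|) :=
      mul_le_mul_of_nonneg_right (by linarith) (mul_nonneg (abs_nonneg x) (abs_nonneg x))
    have h5 : |x| * |x| = x*x := by rw [← abs_mul, abs_mul_self]
    nlinarith
  -- Young's inequality for the cross terms
  have hcross' : (v*η + ε*μ)^2 ≤ ε*v*k*μ/8 := by nlinarith [sq_nonneg (v*η - ε*μ)]
  have hθ : 0 < ε*v*k/4 := by positivity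
  have hyoung : (v*η + ε*μ)*(|x| * |s|) ≤ (ε*v*k/8)*(x*x) + (μ/4)*s^2 := by
    have hy := young_aux (th := ε*v*k/4) (cr := v*η + ε*μ) (mu := μ) (X := |x|) (S := |s|)
      hθ (by linarith [hcross'])
    have hxx : |x|^2 = x*x := by rw [sq_abs]; ring
    have hss2 : |s|^2 = s^2 := sq_abs s
    calc (v*η + ε*μ)*(|x| * |s|) ≤ (ε*v*k/4/2)*|x|^2 + (μ/4)*|s|^2 := hy
    _ = (ε*v*k/8)*(x*x) + (μ/4)*s^2 := by rw [hxx, hss2]; ring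
  -- individual bounds
  have b1 : s*(F-k*x) ≤ η*(|x| * |s|) := by
    calc s*(F-k*x) ≤ |s*(F-k*x)| := le_abs_self _
    _ = |s| * |F-k*x| := abs_mul _ _
    _ ≤ |s| * (η*|x|) := mul_le_mul_of_nonneg_left hF (abs_nonneg s)
    _ = η*(|x| * |s|) := by ring
  have vb1 : v*(s*(F-k*x)) ≤ v*(η*(|x| * |s|)) := mul_le_mul_of_nonneg_left b1 hv.le
  have b2base : x*s*cb ≤ |x| * |s| := by
    calc x*s*cb ≤ |x*s*cb| := le_abs_self _
    _ = |x| * |s| * |cb| := by rw [abs_mul, abs_mul]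
    _ ≤ |x| * |s| * 1 := mul_le_mul_of_nonneg_left habs_cb (mul_nonneg (abs_nonneg x) (abs_nonneg s))
    _ = |x| * |s| := by ring
  have b2 : ε*μ*(x*s*cb) ≤ ε*μ*(|x| * |s|) :=
    mul_le_mul_of_nonneg_left b2base (by positivity)
  have b3 : -(u*s) ≤ |u| := by
    calc -(u*s) ≤ |u*s| := neg_le_abs _
    _ = |u| * |s| := abs_mul _ _
    _ ≤ |u| * 1 := mul_le_mul_of_nonneg_left habs_s (abs_nonneg u)
    _ = |u| := by ring
  have b4 : ε*(u*(x*cb)) ≤ |u| := by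
    have h1 : u*(x*cb) ≤ |u| := by
      calc u*(x*cb) ≤ |u*(x*cb)| := le_abs_self _
      _ = |u| * (|x| * |cb|) := by rw [abs_mul, abs_mul]
      _ ≤ |u| * (1*1) := by
          apply mul_le_mul_of_nonneg_left _ (abs_nonneg u)
          exact mul_le_mul hx1 habs_cb (abs_nonneg cb) zero_le_one
      _ = |u| := by ring
    calc ε*(u*(x*cb)) ≤ ε*|u| := mul_le_mul_of_nonneg_left h1 hε.le
    _ ≤ 1*|u| := mul_le_mul_of_nonneg_right (by linarith) (abs_nonneg u)
    _ = |u| := one_mul _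
  -- cb * (x*F) ≥ (1/2)(k/2) x²
  have hxF0 : (0:ℝ) ≤ x*F :=
    le_trans (mul_nonneg (by linarith : (0:ℝ) ≤ k/2) (mul_self_nonneg x)) hxF
  have b5base : (1/2)*(x*F) ≤ cb*(x*F) := mul_le_mul_of_nonneg_right hcb hxF0
  have b5 : ε*v*((k/4)*(x*x)) ≤ ε*v*(cb*(x*F)) :=
    mul_le_mul_of_nonneg_left (by nlinarith) (by positivity)
  -- s² vs 1 - cb
  have hs2 : 1 - cb ≤ s^2 := by nlinarith [mul_nonneg (sub_nonneg.2 hcb1) hcb0]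
  have hs3 : s^2 ≤ 2*(1-cb) := by nlinarith [sq_nonneg (1-cb)]
  have hεvs : ε*v*s^2 ≤ (μ/4)*s^2 := mul_le_mul_of_nonneg_right hεv (sq_nonneg s)
  have hs2' : (μ/2)*(1-cb) ≤ (μ/2)*s^2 := mul_le_mul_of_nonneg_left hs2 (by positivity)
  -- upper bound for P and comparison with c₀
  have hxs : -(ε*(x*s)) ≤ ε*((x*x + s^2)/2) := by
    have h1 : -(x*s) ≤ (x*x + s^2)/2 := by nlinarith [sq_nonneg (x+s)]
    calc -(ε*(x*s)) = ε*(-(x*s)) := by ring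
    _ ≤ ε*((x*x+s^2)/2) := mul_le_mul_of_nonneg_left h1 hε.le
  have h5 : ε*(x*x) ≤ (1/2)*(x*x) := mul_le_mul_of_nonneg_right hε2 (mul_self_nonneg x)
  have h6 : ε*s^2 ≤ (1/2)*(2*(1-cb)) :=
    le_trans (mul_le_mul_of_nonneg_right hε2 (sq_nonneg s)) (by linarith [sq_nonneg s])
  have hPupper : (k/2)*(x*x) + (1-cb) - ε*(x*s) ≤ (k/2+1/4)*(x*x) + (3/2)*(1-cb) := by
    linarith
  have hcbge : (0:ℝ) ≤ 1 - cb := by linarith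
  have h7 := mul_le_mul_of_nonneg_left hPupper hc₀0
  have h8 : c₀*(k/2+1) ≤ ε*v*k/8 := by
    have hne : (8:ℝ)*(k/2+1) ≠ 0 := by positivity
    have := mul_le_mul_of_nonneg_right hc₀1 (show (0:ℝ) ≤ k/2+1 by linarith)
    have heq : ε*v*k/(8*(k/2+1))*(k/2+1) = ε*v*k/8 := by
      rw [← div_div, div_mul_cancel₀ _ (show (k/2+1:ℝ) ≠ 0 by positivity)]
    linarith [heq ▸ this]
  have hPfinal : c₀*((k/2)*(x*x) + (1-cb) - ε*(x*s)) ≤ (ε*v*k/8)*(x*x) + (μ/2)*(1-cb) := by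
    have h9pre : c₀*(k/2+1/4) ≤ ε*v*k/8 := by nlinarith [h8, hc₀0]
    have h9 : (c₀*(k/2+1/4))*(x*x) ≤ (ε*v*k/8)*(x*x) :=
      mul_le_mul_of_nonneg_right h9pre (mul_self_nonneg x)
    have h10 : c₀*((3/2)*(1-cb)) ≤ (μ/2)*(1-cb) := by
      have h11 : (3/2)*c₀ ≤ μ/2 := by linarith
      calc c₀*((3/2)*(1-cb)) = ((3/2)*c₀)*(1-cb) := by ring
      _ ≤ (μ/2)*(1-cb) := mul_le_mul_of_nonneg_right h11 hcbge
    linarith [h7, h9, h10]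
  -- assemble everything
  linarith [vb1, b2, b3, b4, b5, hyoung, hεvs, hs2', hPfinal, abs_nonneg u]


/-- Initial smallness of the Lyapunov function. -/
lemma P0_bound {k ε m δ x β : ℝ} (hk : 0 < k) (hε : 0 < ε) (hε2 : ε ≤ 1/2)
    (hδ0 : |x| + |β| < δ) (hδ2 : δ^2 ≤ m/(k+2)) :
    (k/2)*(x*x) + (1 - Real.cos β) - ε*(x*Real.sin β) < m/2 := by
  have h1 : 1 - Real.cos β ≤ β^2/2 := by
    have := Real.one_sub_sq_div_two_le_cos (x := β); linarith
  have h2 : -(x*Real.sin β) ≤ |x| * |β| := by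
    calc -(x*Real.sin β) ≤ |x*Real.sin β| := neg_le_abs _
    _ = |x| * |Real.sin β| := abs_mul _ _
    _ ≤ |x| * |β| := mul_le_mul_of_nonneg_left (Real.abs_sin_le_abs) (abs_nonneg x)
  have h2a : ε*(-(x*Real.sin β)) ≤ ε*(|x| * |β|) := mul_le_mul_of_nonneg_left h2 hε.le
  have h2b : ε*(|x| * |β|) ≤ (1/2)*(|x| * |β|) :=
    mul_le_mul_of_nonneg_right hε2 (mul_nonneg (abs_nonneg x) (abs_nonneg β))
  have h4 : (|x|+|β|)^2 < δ^2 := by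
    have h0 : (0:ℝ) ≤ |x| + |β| := by positivity
    nlinarith
  have h6 : ((k+2)/2)*((|x|+|β|)^2) < ((k+2)/2)*(m/(k+2)) :=
    mul_lt_mul_of_pos_left (lt_of_lt_of_le h4 hδ2) (by positivity)
  have h7 : ((k+2)/2)*(m/(k+2)) = m/2 := by
    field_simp
  have hxx : |x|^2 = x*x := by rw [sq_abs]; ring
  have hbb : |β|^2 = β^2 := sq_abs β
  nlinarith [mul_nonneg (abs_nonneg x) (abs_nonneg β), sq_nonneg (|x| - |β|), hk]

/-- If the leader's steering perturbation is small and vanishes asymptotically,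
solutions of the perturbed reduced shape dynamics starting near the equilibrium
converge to the abreast formation `(ρ₀, -π/2)`. -/
theorem perturbed_convergence_vanishing_input
    (v₁ μ₁ ρ₀ : ℝ) (hv₁ : 0 < v₁) (hμ₁ : 0 < μ₁) (hρ₀ : 0 < ρ₀)
    (g f : ℝ → ℝ)
    (hg : ContDiffOn ℝ 2 g (Set.Ioi 0))
    (hg0 : g ρ₀ = 0)
    (hgpos : ∀ x ∈ Set.Ioi (0 : ℝ), x ≠ ρ₀ → 0 < g x)
    (hglim0 : Filter.Tendsto g (nhdsWithin 0 (Set.Ioi 0)) Filter.atTop)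
    (hglimtop : Filter.Tendsto g Filter.atTop Filter.atTop)
    (hf : ∀ x ∈ Set.Ioi (0 : ℝ), HasDerivAt g (f x) x)
    (hf' : ∀ x ∈ Set.Ioi (0 : ℝ), HasDerivAt f (deriv f x) x)
    (hf'ρ₀ : 0 < deriv f ρ₀) :
    ∃ δ > (0 : ℝ),
      ∀ u₁ : ℝ → ℝ, Continuous u₁ →
        (∃ b : ℝ, b < δ ∧ ∀ t : ℝ, 0 ≤ t → |u₁ t| ≤ b) →
        Filter.Tendsto u₁ Filter.atTop (nhds 0) →
        ∀ ρ α₁ : ℝ → ℝ,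
          (∀ t : ℝ, 0 ≤ t → ρ t ∈ Set.Ioi (0 : ℝ)) →
          (∀ t : ℝ, 0 ≤ t → HasDerivAt ρ (-(v₁ * Real.cos (α₁ t))) t) →
          (∀ t : ℝ, 0 ≤ t →
            HasDerivAt α₁ (-(u₁ t) - μ₁ * Real.cos (α₁ t) + v₁ * f (ρ t)) t) →
          |ρ 0 - ρ₀| + |α₁ 0 + π / 2| < δ →
          Filter.Tendsto ρ Filter.atTop (nhds ρ₀) ∧
            Filter.Tendsto α₁ Filter.atTop (nhds (-(π / 2))) := by
  have hρ₀' : ρ₀ ∈ Set.Ioi (0:ℝ) := hρ₀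
  set k := deriv f ρ₀ with hk_def
  have hk : (0:ℝ) < k := hf'ρ₀
  -- f ρ₀ = 0 since g has a local min at ρ₀
  have hmin : IsLocalMin g ρ₀ := by
    filter_upwards [isOpen_Ioi.mem_nhds hρ₀'] with y hy
    rcases eq_or_ne y ρ₀ with h | h
    · rw [h]
    · rw [hg0]; exact (hgpos y hy h).le
  have hfρ₀ : f ρ₀ = 0 := hmin.hasDerivAt_eq_zero (hf ρ₀ hρ₀')
  -- the small parameter ε
  set ε := min (μ₁/(4*v₁)) (min (1/2) (min (k/2) (v₁*k/(32*μ₁)))) with hε_def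
  have hε : 0 < ε :=
    lt_min (by positivity) (lt_min (by norm_num) (lt_min (by positivity) (by positivity)))
  have hεv : ε*v₁ ≤ μ₁/4 := by
    have h1 : ε ≤ μ₁/(4*v₁) := min_le_left _ _
    have h2 := mul_le_mul_of_nonneg_right h1 hv₁.le
    have h3 : μ₁/(4*v₁)*v₁ = μ₁/4 := by field_simp
    linarith [h3 ▸ h2]
  have hε2 : ε ≤ 1/2 := le_trans (min_le_right _ _) (min_le_left _ _)
  have hεk : ε ≤ k/2 :=
    le_trans (min_le_right _ _) (le_trans (min_le_right _ _) (min_le_left _ _))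
  have hε4 : ε ≤ v₁*k/(32*μ₁) :=
    le_trans (min_le_right _ _) (le_trans (min_le_right _ _) (min_le_right _ _))
  have hεμ : 2*(ε*μ₁)^2 ≤ ε*v₁*k*μ₁/16 := by
    have h := (le_div_iff₀ (show (0:ℝ) < 32*μ₁ by positivity)).mp hε4
    have hprod : 0 ≤ (ε*μ₁) * (v₁*k - ε*(32*μ₁)) :=
      mul_nonneg (by positivity) (by linarith)
    linarith only [hprod]
  -- the small parameter η
  set η := min (k/2) (Real.sqrt (ε*k*μ₁/(32*v₁))) with hη_def
  have hηpos : 0 < η := lt_min (by positivity) (Real.sqrt_pos.2 (by positivity))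
  have hηk : η ≤ k/2 := min_le_left _ _
  have hη2 : 2*(v₁*η)^2 ≤ ε*v₁*k*μ₁/16 := by
    have h1 : η ≤ Real.sqrt (ε*k*μ₁/(32*v₁)) := min_le_right _ _
    have h2 : η^2 ≤ ε*k*μ₁/(32*v₁) := by
      calc η^2 ≤ Real.sqrt (ε*k*μ₁/(32*v₁))^2 := pow_le_pow_left₀ hηpos.le h1 2
      _ = ε*k*μ₁/(32*v₁) := Real.sq_sqrt (by positivity)
    have h3 : 2*v₁^2*(η^2) ≤ 2*v₁^2*(ε*k*μ₁/(32*v₁)) :=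
      mul_le_mul_of_nonneg_left h2 (by positivity)
    have h4 : 2*v₁^2*(ε*k*μ₁/(32*v₁)) = ε*v₁*k*μ₁/16 := by field_simp; ring
    calc 2*(v₁*η)^2 = 2*v₁^2*(η^2) := by ring
    _ ≤ 2*v₁^2*(ε*k*μ₁/(32*v₁)) := h3
    _ = ε*v₁*k*μ₁/16 := h4
  have hcross : 2*(v₁*η)^2 + 2*(ε*μ₁)^2 ≤ ε*v₁*k*μ₁/8 := by linarith
  -- the radius r from the derivative of f at ρ₀
  have hlo := hasDerivAt_iff_isLittleO.mp (hf' ρ₀ hρ₀')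
  have hev := (Asymptotics.isLittleO_iff.mp hlo) hηpos
  rw [Metric.eventually_nhds_iff] at hev
  obtain ⟨r₁, hr₁, hball⟩ := hev
  set r := min (r₁/2) 1 with hr_def
  have hrpos : 0 < r := lt_min (by linarith) (by norm_num)
  have hr1 : r ≤ 1 := min_le_right _ _
  have hFbound : ∀ y : ℝ, |y - ρ₀| ≤ r → |f y - k*(y - ρ₀)| ≤ η*|y - ρ₀| := by
    intro y hy
    have hd : dist y ρ₀ < r₁ := by
      rw [Real.dist_eq]
      have : r < r₁ := lt_of_le_of_lt (min_le_left _ _) (by linarith)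
      linarith
    have h := hball hd
    rw [show k*(y - ρ₀) = (y - ρ₀)*k from mul_comm _ _]
    simpa [hfρ₀, Real.norm_eq_abs, smul_eq_mul] using h
  -- decay rate and level
  set c₀ := min ((ε*v₁*k)/(8*(k/2+1))) (μ₁/3) with hc₀_def
  have hc₀ : 0 < c₀ := lt_min (by positivity) (by positivity)
  have hc₀1 : c₀ ≤ ε*v₁*k/(8*(k/2+1)) := min_le_left _ _
  have hc₀2 : c₀ ≤ μ₁/3 := min_le_right _ _
  set m := (min ((k/4)*r^2) (1/20))/4 with hm_def
  have hm : 0 < m := by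
    have := lt_min (show (0:ℝ) < (k/4)*r^2 by positivity) (show (0:ℝ) < 1/20 by norm_num)
    simp only [hm_def]; linarith only [this]
  have hm1 : m ≤ ((k/4)*r^2)/4 := by
    have := min_le_left ((k/4)*r^2) (1/20); simp only [hm_def]; linarith only [this]
  have hm2 : m ≤ 1/80 := by
    have := min_le_right ((k/4)*r^2) (1/20); simp only [hm_def]; linarith only [this]
  -- δ
  set δ := min (Real.sqrt (m/(k+2))) (min (min r (1/2)) (c₀*m/4)) with hδ_def
  have hδpos : 0 < δ :=
    lt_min (Real.sqrt_pos.2 (by positivity)) (lt_min (lt_min hrpos (by norm_num)) (by positivity))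
  have hδ1 : δ^2 ≤ m/(k+2) := by
    have h1 : δ ≤ Real.sqrt (m/(k+2)) := min_le_left _ _
    calc δ^2 ≤ Real.sqrt (m/(k+2))^2 := pow_le_pow_left₀ hδpos.le h1 2
    _ = m/(k+2) := Real.sq_sqrt (by positivity)
  have hδr : δ ≤ r := le_trans (min_le_right _ _) (le_trans (min_le_left _ _) (min_le_left _ _))
  have hδhalf : δ ≤ 1/2 :=
    le_trans (min_le_right _ _) (le_trans (min_le_left _ _) (min_le_right _ _))
  have hδc : δ ≤ c₀*m/4 := le_trans (min_le_right _ _) (min_le_right _ _)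
  clear_value k ε η r c₀ m δ
  refine ⟨δ, hδpos, ?_⟩
  intro u₁ hu₁c hbex hu₁0 ρ α₁ hρpos hρ' hα' hinit
  obtain ⟨b, hbδ, hub⟩ := hbex
  have hb0 : 0 ≤ b := le_trans (abs_nonneg _) (hub 0 le_rfl)
  -- abbreviations
  set B : ℝ → ℝ := fun t => α₁ t + π/2 with hB_def
  set X : ℝ → ℝ := fun t => ρ t - ρ₀ with hX_def
  set P : ℝ → ℝ := fun t =>
    (k/2)*(X t*X t) + (1 - Real.cos (B t)) - ε*(X t*Real.sin (B t)) with hP_def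
  set D : ℝ → ℝ := fun t =>
    v₁*Real.sin (B t)*(f (ρ t) - k*X t) - u₁ t*Real.sin (B t) - μ₁*Real.sin (B t)^2
      + ε*v₁*Real.sin (B t)^2 + ε*(u₁ t)*(X t)*Real.cos (B t)
      + ε*μ₁*(X t)*Real.sin (B t)*Real.cos (B t)
      - ε*v₁*Real.cos (B t)*(X t)*(f (ρ t)) with hD_def
  clear_value B X P D
  have hXeq : ∀ t, X t = ρ t - ρ₀ := fun t => by rw [hX_def]
  have hBeq : ∀ t, B t = α₁ t + π/2 := fun t => by rw [hB_def]
  have hcos_eq : ∀ t, Real.cos (α₁ t) = Real.sin (B t) := fun t => by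
    rw [hBeq t, Real.sin_add_pi_div_two]
  -- derivatives
  have hXd : ∀ t, 0 ≤ t → HasDerivAt X (-(v₁*Real.sin (B t))) t := by
    intro t ht
    have h := (hρ' t ht).sub_const ρ₀
    rw [hcos_eq t] at h
    exact hX_def ▸ h
  have hBd : ∀ t, 0 ≤ t → HasDerivAt B (-(u₁ t) - μ₁*Real.sin (B t) + v₁*(f (ρ t))) t := by
    intro t ht
    have h := (hα' t ht).add_const (π/2)
    rw [hcos_eq t] at h
    exact hB_def ▸ h
  have hPd : ∀ t, 0 ≤ t → HasDerivAt P (D t) t := by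
    intro t ht
    have h1 := hXd t ht
    have h2 := hBd t ht
    have h3 : HasDerivAt (fun τ => Real.sin (B τ))
        (Real.cos (B t) * (-(u₁ t) - μ₁*Real.sin (B t) + v₁*(f (ρ t)))) t :=
      (Real.hasDerivAt_sin (B t)).comp t h2
    have h4 : HasDerivAt (fun τ => Real.cos (B τ))
        (-Real.sin (B t) * (-(u₁ t) - μ₁*Real.sin (B t) + v₁*(f (ρ t)))) t :=
      (Real.hasDerivAt_cos (B t)).comp t h2
    have h5 := (((h1.mul h1).const_mul (k/2)).add
      ((hasDerivAt_const t (1:ℝ)).sub h4)).sub ((h1.mul h3).const_mul ε)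
    rw [hP_def, hD_def]
    refine h5.congr_deriv ?_
    beta_reduce; ring
  -- trig facts in the region
  have htrig : ∀ t, |B t| ≤ 1/2 →
      (1/2 ≤ Real.cos (B t) ∧ Real.cos (B t) ≤ 1 ∧
        Real.sin (B t)^2 + Real.cos (B t)^2 = 1 ∧ (B t)^2/5 ≤ 1 - Real.cos (B t)) := by
    intro t hβ
    have hsq : (B t)^2 ≤ (1/2:ℝ)^2 := by
      rw [← sq_abs]; exact pow_le_pow_left₀ (abs_nonneg _) hβ 2
    have h1 := Real.one_sub_sq_div_two_le_cos (x := B t)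
    exact ⟨by linarith only [h1, hsq], Real.cos_le_one _, Real.sin_sq_add_cos_sq _, quad_cos hβ⟩
  -- pointwise dissipation inequality in the region
  have hDle : ∀ t, 0 ≤ t → |X t| ≤ r → |B t| ≤ 1/2 → D t ≤ -c₀*P t + 2*|u₁ t| := by
    intro t ht hxr hβ
    obtain ⟨hcb, hcb1, hpyth, _⟩ := htrig t hβ
    have hFb : |f (ρ t) - k*(X t)| ≤ η*|X t| := by
      rw [hXeq t]
      exact hFbound (ρ t) (by rw [← hXeq t]; exact hxr)
    have hkey := key_ineq (u := u₁ t) hv₁ hμ₁ hk hε hεv hε2 hηpos.le hηk hcross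
      hc₀1 hc₀2 hc₀.le hcb hcb1 hpyth
      (le_trans hxr hr1) hFb
    calc D t = v₁*Real.sin (B t)*(f (ρ t) - k*X t) - u₁ t*Real.sin (B t)
          - μ₁*Real.sin (B t)^2 + ε*v₁*Real.sin (B t)^2
          + ε*(u₁ t)*(X t)*Real.cos (B t) + ε*μ₁*(X t)*Real.sin (B t)*Real.cos (B t)
          - ε*v₁*Real.cos (B t)*(X t)*(f (ρ t)) := by rw [hD_def]
    _ ≤ -c₀*((k/2)*(X t*X t) + (1 - Real.cos (B t)) - ε*(X t*Real.sin (B t))) + 2*|u₁ t| := hkey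
    _ = -c₀*P t + 2*|u₁ t| := by rw [hP_def]
  -- lower bound of P in the region
  have hPlow : ∀ t, |B t| ≤ 1/2 →
      (k/4)*(X t*X t) + (1/2)*(1 - Real.cos (B t)) ≤ P t := by
    intro t hβ
    obtain ⟨hcb, hcb1, hpyth, _⟩ := htrig t hβ
    have := P_lower (x := X t) hk hε hε2 hεk hpyth hcb hcb1
    rw [hP_def]
    exact this
  -- initial data
  have hX0 : |X 0| < δ := by
    rw [hXeq 0]; have := abs_nonneg (α₁ 0 + π/2); linarith only [hinit, this]
  have hB0 : |B 0| < δ := by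
    rw [hBeq 0]; have := abs_nonneg (ρ 0 - ρ₀); linarith only [hinit, this]
  have hP0 : P 0 < m/2 := by
    have h := P0_bound (x := X 0) (β := B 0) hk hε hε2
      (by rw [hXeq 0, hBeq 0]; exact hinit) hδ1
    rw [hP_def]; exact h
  have hKc : 2*b/c₀ < m/2 := by
    rw [div_lt_iff₀ hc₀]
    linarith only [hδc, hbδ]
  -- forward invariance of the region
  have hreg : ∀ t, 0 ≤ t → |X t| < r ∧ |B t| < 1/2 := by
    by_contra hcon
    push_neg at hcon
    obtain ⟨t₀, ht₀, hdis⟩ := hcon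
    have hdis' : r ≤ |X t₀| ∨ 1/2 ≤ |B t₀| := by
      by_cases h1 : |X t₀| < r
      · exact Or.inr (hdis h1)
      · exact Or.inl (not_lt.mp h1)
    set Bad := {t : ℝ | 0 ≤ t ∧ (r ≤ |X t| ∨ 1/2 ≤ |B t|)} with hBad_def
    have hBadne : Bad.Nonempty := ⟨t₀, ht₀, hdis'⟩
    have hBadbdd : BddBelow Bad := ⟨0, fun t ht => ht.1⟩
    set T := sInf Bad with hT_def
    have hT0 : 0 ≤ T := le_csInf hBadne (fun t ht => ht.1)
    have hTcl : T ∈ closure Bad := csInf_mem_closure hBadne hBadbdd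
    have hTbad : r ≤ |X T| ∨ 1/2 ≤ |B T| := by
      rw [mem_closure_iff_frequently] at hTcl
      have hfreq : (∃ᶠ x in 𝓝 T, r ≤ |X x|) ∨ (∃ᶠ x in 𝓝 T, 1/2 ≤ |B x|) := by
        rw [← Filter.frequently_or_distrib]
        exact hTcl.mono (fun x hx => hx.2)
      rcases hfreq with h | h
      · left
        by_contra hlt
        push_neg at hlt
        have hcX : Filter.Tendsto (fun τ => |X τ|) (𝓝 T) (𝓝 |X T|) :=
          ((hXd T hT0).continuousAt).abs
        have hev2 : ∀ᶠ x in 𝓝 T, |X x| < r := hcX.eventually_lt_const hlt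
        obtain ⟨x, hx1, hx2⟩ := (h.and_eventually hev2).exists
        exact absurd hx1 (not_le.2 hx2)
      · right
        by_contra hlt
        push_neg at hlt
        have hcB : Filter.Tendsto (fun τ => |B τ|) (𝓝 T) (𝓝 |B T|) :=
          ((hBd T hT0).continuousAt).abs
        have hev2 : ∀ᶠ x in 𝓝 T, |B x| < 1/2 := hcB.eventually_lt_const hlt
        obtain ⟨x, hx1, hx2⟩ := (h.and_eventually hev2).exists
        exact absurd hx1 (not_le.2 hx2)
    have hTpos : 0 < T := by
      rcases hT0.lt_or_eq with h | h
      · exact h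
      · exfalso
        rcases h ▸ hTbad with h1 | h1
        · exact absurd (lt_of_lt_of_le hX0 hδr) (not_lt.2 h1)
        · exact absurd (lt_of_lt_of_le hB0 hδhalf) (not_lt.2 h1)
    have hpre : ∀ τ, 0 ≤ τ → τ < T → |X τ| ≤ r ∧ |B τ| ≤ 1/2 := by
      intro τ h0 hτ
      by_contra hcc
      have hτBad : τ ∈ Bad := by
        refine ⟨h0, ?_⟩
        by_cases h1 : |X τ| ≤ r
        · by_cases h2 : |B τ| ≤ 1/2
          · exact absurd ⟨h1, h2⟩ hcc
          · exact Or.inr (not_le.mp h2).le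
        · exact Or.inl (not_le.mp h1).le
      exact absurd (csInf_le hBadbdd hτBad) (not_le.2 hτ)
    have hXT : |X T| ≤ r := by
      have hc : ContinuousWithinAt (fun τ => |X τ|) (Set.Iio T) T :=
        (((hXd T hT0).continuousAt).abs).continuousWithinAt
      refine le_of_tendsto hc ?_
      filter_upwards [Ioo_mem_nhdsLT_of_mem (Set.mem_Ioc.2 ⟨hTpos, le_refl T⟩)] with τ hτ
      exact (hpre τ hτ.1.le hτ.2).1
    have hBT : |B T| ≤ 1/2 := by
      have hc : ContinuousWithinAt (fun τ => |B τ|) (Set.Iio T) T :=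
        (((hBd T hT0).continuousAt).abs).continuousWithinAt
      refine le_of_tendsto hc ?_
      filter_upwards [Ioo_mem_nhdsLT_of_mem (Set.mem_Ioc.2 ⟨hTpos, le_refl T⟩)] with τ hτ
      exact (hpre τ hτ.1.le hτ.2).2
    have hregIcc : ∀ τ ∈ Set.Icc 0 T, |X τ| ≤ r ∧ |B τ| ≤ 1/2 := by
      intro τ hτ
      rcases lt_or_eq_of_le hτ.2 with h | h
      · exact hpre τ hτ.1 h
      · rw [h]; exact ⟨hXT, hBT⟩
    have hDleT : ∀ τ ∈ Set.Icc 0 T, D τ ≤ -c₀*P τ + 2*b := by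
      intro τ hτ
      have h1 := hDle τ hτ.1 (hregIcc τ hτ).1 (hregIcc τ hτ).2
      have h2 := hub τ hτ.1
      have h3 := abs_nonneg (u₁ τ)
      linarith only [h1, h2, h3]
    have hgr := gron_max hc₀ (fun τ hτ => hPd τ hτ.1) hDleT T (Set.right_mem_Icc.2 hT0)
    have hPT : P T < m :=
      lt_of_le_of_lt hgr (max_lt (by linarith only [hP0, hm]) (by linarith only [hKc, hm]))
    have hPlowT := hPlow T hBT
    obtain ⟨hcbT, hcb1T, _, hquadT⟩ := htrig T hBT
    rcases hTbad with h | h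
    · have h2 : r*r ≤ X T*X T := by
        have := mul_self_le_mul_self hrpos.le h
        rwa [abs_mul_abs_self] at this
      have h3 : (k/4)*(r*r) ≤ (k/4)*(X T*X T) :=
        mul_le_mul_of_nonneg_left h2 (by positivity)
      have h4 : 0 < (k/4)*(r*r) := by positivity
      have h5 : (k/4)*(X T*X T) < m := by linarith only [hPT, hPlowT, hcb1T]
      have h6 : m ≤ ((k/4)*(r*r))/4 := by
        have : r^2 = r*r := sq r
        rw [← this]; exact hm1
      linarith
    · have h2 : (1/4:ℝ) ≤ (B T)^2 := by
        have := mul_self_le_mul_self (by norm_num : (0:ℝ) ≤ 1/2) h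
        rw [abs_mul_abs_self] at this
        linarith only [this, sq (B T) ▸ le_refl ((B T)^2)]
      have hq : 0 ≤ (k/4)*(X T*X T) :=
        mul_nonneg (by positivity) (mul_self_nonneg _)
      have h3 : (1/2)*(1 - Real.cos (B T)) < m := by
        linarith only [hPT, hPlowT, hq]
      linarith only [hquadT, hm2, h2, h3]
  -- global consequences
  have hregt : ∀ t, 0 ≤ t → |X t| ≤ r ∧ |B t| ≤ 1/2 :=
    fun t ht => ⟨(hreg t ht).1.le, (hreg t ht).2.le⟩
  have hPlowg : ∀ t, 0 ≤ t → (k/4)*(X t*X t) + (1/2)*(1 - Real.cos (B t)) ≤ P t :=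
    fun t ht => hPlow t (hregt t ht).2
  have hPnn : ∀ t, 0 ≤ t → 0 ≤ P t := by
    intro t ht
    have h1 := hPlowg t ht
    have h2 := Real.cos_le_one (B t)
    have hq : 0 ≤ (k/4)*(X t*X t) := mul_nonneg (by positivity) (mul_self_nonneg _)
    linarith only [h1, h2, hq]
  -- P tends to 0
  have hPto : Filter.Tendsto P Filter.atTop (𝓝 0) := by
    rw [NormedAddCommGroup.tendsto_nhds_zero]
    intro εp hεp
    have hev0 : ∀ᶠ t in Filter.atTop, |u₁ t| < c₀*εp/8 := by
      have h := Metric.tendsto_nhds.mp hu₁0 (c₀*εp/8) (by positivity)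
      simpa [Real.dist_eq] using h
    obtain ⟨T₀', hT₀'⟩ := Filter.eventually_atTop.mp hev0
    set T₀ := max T₀' 0 with hT₀_def
    have hT₀0 : 0 ≤ T₀ := le_max_right _ _
    have hKdiv : (c₀*εp/4)/c₀ = εp/4 := by field_simp
    have key : ∀ t, T₀ ≤ t → P t ≤ (P T₀ - εp/4)*Real.exp (-(c₀*(t - T₀))) + εp/4 := by
      intro t ht
      have hg2 := gron_aux (a := T₀) (b := t) (K := c₀*εp/4) hc₀
        (fun τ hτ => hPd τ (le_trans hT₀0 hτ.1))
        (fun τ hτ => by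
          have h1 := hDle τ (le_trans hT₀0 hτ.1) (hregt τ (le_trans hT₀0 hτ.1)).1
            (hregt τ (le_trans hT₀0 hτ.1)).2
          have h2 := hT₀' τ (le_trans (le_max_left _ _) hτ.1)
          have h3 := abs_nonneg (u₁ τ)
          linarith only [h1, h2, h3])
        t (Set.right_mem_Icc.2 ht)
      rw [hKdiv] at hg2
      exact hg2
    have hexpto : Filter.Tendsto
        (fun t => (P T₀ - εp/4)*Real.exp (-(c₀*(t - T₀)))) Filter.atTop (𝓝 0) := by
      have h1 : Filter.Tendsto (fun t : ℝ => c₀*(t - T₀)) Filter.atTop Filter.atTop := by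
        apply Filter.Tendsto.const_mul_atTop hc₀
        exact tendsto_atTop_add_const_right _ (-T₀) tendsto_id
      have h2 : Filter.Tendsto (fun t : ℝ => -(c₀*(t - T₀))) Filter.atTop Filter.atBot :=
        tendsto_neg_atTop_atBot.comp h1
      have h3 := Real.tendsto_exp_atBot.comp h2
      simpa using h3.const_mul (P T₀ - εp/4)
    have hev2 : ∀ᶠ t in Filter.atTop,
        (P T₀ - εp/4)*Real.exp (-(c₀*(t - T₀))) < εp/2 :=
      hexpto.eventually_lt_const (by linarith)
    filter_upwards [hev2, Filter.eventually_ge_atTop T₀, Filter.eventually_ge_atTop (0:ℝ)]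
      with t h1 h2 h3
    have h4 := key t h2
    rw [Real.norm_eq_abs, abs_of_nonneg (hPnn t h3)]
    linarith only [h1, h4, hεp]
  -- convergence of ρ
  have hsqto : ∀ C : ℝ, Filter.Tendsto (fun t => Real.sqrt (C*P t)) Filter.atTop (𝓝 0) := by
    intro C
    have h1 : Filter.Tendsto (fun t => C*P t) Filter.atTop (𝓝 0) := by
      simpa using hPto.const_mul C
    have h2 := (Real.continuous_sqrt.tendsto 0).comp h1
    simpa [Function.comp_def] using h2
  have hXbound : ∀ t, 0 ≤ t → |X t| ≤ Real.sqrt ((4/k)*P t) := by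
    intro t ht
    have h1 := hPlowg t ht
    have h2 := Real.cos_le_one (B t)
    have h3 : (k/4)*(X t*X t) ≤ P t := by linarith only [h1, h2]
    have h4 : X t*X t ≤ (4/k)*P t := by
      have h5 := mul_le_mul_of_nonneg_left h3 (show (0:ℝ) ≤ 4/k by positivity)
      have h6 : (4/k)*((k/4)*(X t*X t)) = X t*X t := by field_simp
      linarith only [h6 ▸ h5]
    calc |X t| = Real.sqrt ((X t)^2) := (Real.sqrt_sq_eq_abs _).symm
    _ ≤ Real.sqrt ((4/k)*P t) := Real.sqrt_le_sqrt (by linarith only [h4, sq (X t) ▸ le_refl ((X t)^2)])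
  have hBbound : ∀ t, 0 ≤ t → |B t| ≤ Real.sqrt (10*P t) := by
    intro t ht
    have h1 := hPlowg t ht
    obtain ⟨_, _, _, hquad⟩ := htrig t (hregt t ht).2
    have hq : 0 ≤ (k/4)*(X t*X t) := mul_nonneg (by positivity) (mul_self_nonneg _)
    have h3 : (B t)^2 ≤ 10*P t := by linarith only [hquad, h1, hq]
    calc |B t| = Real.sqrt ((B t)^2) := (Real.sqrt_sq_eq_abs _).symm
    _ ≤ Real.sqrt (10*P t) := Real.sqrt_le_sqrt h3
  constructor
  · have hlow : ∀ᶠ t in Filter.atTop, ρ₀ - Real.sqrt ((4/k)*P t) ≤ ρ t := by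
      filter_upwards [Filter.eventually_ge_atTop (0:ℝ)] with t ht
      have := (abs_le.mp (hXbound t ht)).1
      rw [hXeq t] at this
      linarith
    have hup : ∀ᶠ t in Filter.atTop, ρ t ≤ ρ₀ + Real.sqrt ((4/k)*P t) := by
      filter_upwards [Filter.eventually_ge_atTop (0:ℝ)] with t ht
      have := (abs_le.mp (hXbound t ht)).2
      rw [hXeq t] at this
      linarith
    have l1 : Filter.Tendsto (fun t => ρ₀ - Real.sqrt ((4/k)*P t)) Filter.atTop (𝓝 ρ₀) := by
      simpa using (tendsto_const_nhds (x := ρ₀) (f := Filter.atTop)).sub (hsqto (4/k))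
    have l2 : Filter.Tendsto (fun t => ρ₀ + Real.sqrt ((4/k)*P t)) Filter.atTop (𝓝 ρ₀) := by
      simpa using (tendsto_const_nhds (x := ρ₀) (f := Filter.atTop)).add (hsqto (4/k))
    exact tendsto_of_tendsto_of_tendsto_of_le_of_le' l1 l2 hlow hup
  · have hlow : ∀ᶠ t in Filter.atTop, -(π/2) - Real.sqrt (10*P t) ≤ α₁ t := by
      filter_upwards [Filter.eventually_ge_atTop (0:ℝ)] with t ht
      have := (abs_le.mp (hBbound t ht)).1
      rw [hBeq t] at this
      linarith
    have hup : ∀ᶠ t in Filter.atTop, α₁ t ≤ -(π/2) + Real.sqrt (10*P t) := by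
      filter_upwards [Filter.eventually_ge_atTop (0:ℝ)] with t ht
      have := (abs_le.mp (hBbound t ht)).2
      rw [hBeq t] at this
      linarith
    have l1 : Filter.Tendsto (fun t => -(π/2) - Real.sqrt (10*P t)) Filter.atTop (𝓝 (-(π/2))) := by
      simpa using (tendsto_const_nhds (x := -(π/2)) (f := Filter.atTop)).sub (hsqto 10)
    have l2 : Filter.Tendsto (fun t => -(π/2) + Real.sqrt (10*P t)) Filter.atTop (𝓝 (-(π/2))) := by
      simpa using (tendsto_const_nhds (x := -(π/2)) (f := Filter.atTop)).add (hsqto 10)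
    exact tendsto_of_tendsto_of_tendsto_of_le_of_le' l1 l2 hlow hup
end

section
/- (Proposition 3, convergence to the periodic orbit) Under the hypotheses of the existence statement (v₁ > 0, μ₁ > 0, ρ₀ > 0, T > 0, g C² with g(ρ₀) = 0, g > 0 away from ρ₀, g → ∞ at 0⁺ and ∞, f = g' C¹, f'(ρ₀) > 0, u₁ continuous T-periodic with sup_t |u₁(t)| < k_u* for k_u* sufficiently small), the T-periodic solution (ρ̃, α̃₁) of ρ' = -v₁ cos α₁, α₁' = -u₁(t) - μ₁ cos α₁ + v₁ f(ρ) is exponentially stable: there exist δ > 0, C ≥ 1, λ > 0 such that every solution (ρ, α₁) with ‖(ρ(0) - ρ̃(0), α₁(0) - α̃₁(0))‖ < δ satisfies ‖(ρ(t) - ρ̃(t), α₁(t) - α̃₁(t))‖ ≤ C·e^{-λ t}·‖(ρ(0) - ρ̃(0), α₁(0) - α̃₁(0))‖ for all t ≥ 0; in particular such solutions asymptotically converge to the T-periodic orbit. -/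
open Real Set


lemma aux_mul_abs_le (F u B M : ℝ) (hF : |F| ≤ B) (hu : |u| ≤ M) : F*u ≤ B*M := by
  obtain ⟨hF1, hF2⟩ := abs_le.1 hF
  obtain ⟨hu1, hu2⟩ := abs_le.1 hu
  nlinarith [mul_nonneg (by linarith : (0:ℝ) ≤ B - F) (by linarith : (0:ℝ) ≤ M + u),
    mul_nonneg (by linarith : (0:ℝ) ≤ B + F) (by linarith : (0:ℝ) ≤ M - u)]

lemma aux_quad_nonneg (A B C x y : ℝ) (hA : 0 ≤ A) (hC : 0 ≤ C) (h : B^2 ≤ 4*A*C) :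
    0 ≤ A*x^2 + B*(x*y) + C*y^2 := by
  rcases eq_or_lt_of_le hA with hA0 | hA0
  · have hB : B = 0 := by nlinarith [sq_nonneg B]
    rw [← hA0, hB]
    nlinarith [sq_nonneg y]
  · nlinarith [sq_nonneg (2*A*x + B*y), mul_nonneg (by linarith : (0:ℝ) ≤ 4*A*C - B^2) (sq_nonneg y)]

lemma aux_lower (a η X Y : ℝ) (hη : 0 ≤ η) :
    (min 1 a - η)*(X^2+Y^2) ≤ a*X^2 + Y^2 - η*(X*Y) := by
  have h1 : min 1 a ≤ 1 := min_le_left _ _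
  have h2 : min 1 a ≤ a := min_le_right _ _
  nlinarith [sq_nonneg (X - Y), sq_nonneg X, sq_nonneg Y,
    mul_nonneg hη (sq_nonneg (X - Y)), mul_nonneg hη (sq_nonneg X), mul_nonneg hη (sq_nonneg Y)]

lemma aux_upper (a η X Y : ℝ) (hη : 0 ≤ η) :
    a*X^2 + Y^2 - η*(X*Y) ≤ (max 1 a + η)*(X^2+Y^2) := by
  have h1 : 1 ≤ max 1 a := le_max_left _ _
  have h2 : a ≤ max 1 a := le_max_right _ _
  nlinarith [sq_nonneg (X + Y), sq_nonneg X, sq_nonneg Y,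
    mul_nonneg hη (sq_nonneg (X + Y)), mul_nonneg hη (sq_nonneg X), mul_nonneg hη (sq_nonneg Y)]

lemma aux_abs_mul_half (X Y : ℝ) : |X| * |Y| ≤ (X^2+Y^2)/2 := by
  nlinarith [sq_nonneg (|X| - |Y|), sq_abs X, sq_abs Y]

lemma aux_norm (u w : ℝ) : u^2 ≤ ‖((u, w) : ℝ × ℝ)‖^2 ∧ w^2 ≤ ‖((u, w) : ℝ × ℝ)‖^2 ∧
    ‖((u, w) : ℝ × ℝ)‖^2 ≤ u^2 + w^2 := by
  have h : ‖((u, w) : ℝ × ℝ)‖ = max |u| |w| := by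
    simp [Prod.norm_def, Real.norm_eq_abs]
  rw [h]
  rcases le_total |u| |w| with hc | hc
  · rw [max_eq_right hc]
    refine ⟨?_, ?_, ?_⟩ <;> nlinarith [sq_abs u, sq_abs w, abs_nonneg u, abs_nonneg w]
  · rw [max_eq_left hc]
    refine ⟨?_, ?_, ?_⟩ <;> nlinarith [sq_abs u, sq_abs w, abs_nonneg u, abs_nonneg w]

lemma aux_fst_abs (u w : ℝ) : |u| ≤ ‖((u, w) : ℝ × ℝ)‖ := by
  simpa [Real.norm_eq_abs] using norm_fst_le ((u, w) : ℝ × ℝ)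

lemma aux_snd_abs (u w : ℝ) : |w| ≤ ‖((u, w) : ℝ × ℝ)‖ := by
  simpa [Real.norm_eq_abs] using norm_snd_le ((u, w) : ℝ × ℝ)

lemma aux_sqrt_le (n R : ℝ) (hn : 0 ≤ n) (hR : 0 ≤ R) (h : n^2 ≤ R^2) : n ≤ R := by
  have := Real.sqrt_le_sqrt h
  rwa [Real.sqrt_sq hn, Real.sqrt_sq hR] at this

set_option maxHeartbeats 1000000 in
/-- Proposition 3 (convergence): for sufficiently small continuous `T`-periodic
leader steering, the `T`-periodic solution of the perturbed reduced shape
dynamics near the equilibrium `(ρ₀, -π/2)` is exponentially stable, so nearby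
solutions asymptotically converge to the periodic orbit. -/
theorem prop3_periodic_orbit_exponentially_stable
    (v₁ μ₁ ρ₀ T : ℝ) (hv₁ : 0 < v₁) (hμ₁ : 0 < μ₁) (hρ₀ : 0 < ρ₀) (hT : 0 < T)
    (g f : ℝ → ℝ)
    (hg : ContDiffOn ℝ 2 g (Set.Ioi 0))
    (hg0 : g ρ₀ = 0)
    (hgpos : ∀ x ∈ Set.Ioi (0 : ℝ), x ≠ ρ₀ → 0 < g x)
    (hglim0 : Filter.Tendsto g (nhdsWithin 0 (Set.Ioi 0)) Filter.atTop)
    (hglimtop : Filter.Tendsto g Filter.atTop Filter.atTop)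
    (hf : ∀ x ∈ Set.Ioi (0 : ℝ), HasDerivAt g (f x) x)
    (hf' : ContDiffOn ℝ 1 f (Set.Ioi 0))
    (hf'ρ₀ : 0 < deriv f ρ₀) :
    ∃ kstar > (0 : ℝ), ∃ ε > (0 : ℝ),
      ∀ u₁ : ℝ → ℝ, Continuous u₁ → (∀ t : ℝ, u₁ (t + T) = u₁ t) →
        (∃ b : ℝ, b < kstar ∧ ∀ t : ℝ, |u₁ t| ≤ b) →
        -- any `T`-periodic solution staying `ε`-close to the equilibrium
        ∀ ρT αT : ℝ → ℝ,
          (∀ t : ℝ, 0 < ρT t) →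
          (∀ t : ℝ, HasDerivAt ρT (-(v₁ * Real.cos (αT t))) t) →
          (∀ t : ℝ,
            HasDerivAt αT (-(u₁ t) - μ₁ * Real.cos (αT t) + v₁ * f (ρT t)) t) →
          (∀ t : ℝ, ρT (t + T) = ρT t) → (∀ t : ℝ, αT (t + T) = αT t) →
          (∀ t : ℝ, ‖(ρT t - ρ₀, αT t + π / 2)‖ < ε) →
          -- is exponentially stable
          ∃ δ > (0 : ℝ), ∃ C : ℝ, 1 ≤ C ∧ ∃ lam > (0 : ℝ),
            ∀ ρ α₁ : ℝ → ℝ,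
              (∀ t : ℝ, 0 ≤ t → 0 < ρ t) →
              (∀ t : ℝ, 0 ≤ t → HasDerivAt ρ (-(v₁ * Real.cos (α₁ t))) t) →
              (∀ t : ℝ, 0 ≤ t → HasDerivAt α₁
                (-(u₁ t) - μ₁ * Real.cos (α₁ t) + v₁ * f (ρ t)) t) →
              ‖(ρ 0 - ρT 0, α₁ 0 - αT 0)‖ < δ →
              ∀ t : ℝ, 0 ≤ t →
                ‖(ρ t - ρT t, α₁ t - αT t)‖ ≤
                  C * Real.exp (-lam * t) * ‖(ρ 0 - ρT 0, α₁ 0 - αT 0)‖ := by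
  clear hg hg0 hgpos hglim0 hglimtop hf
  have ha : 0 < deriv f ρ₀ := hf'ρ₀
  set a : ℝ := deriv f ρ₀ with ha_def
  set η : ℝ := (1/2) * min (min 1 a) (min (μ₁/(2*v₁)) (v₁*a/μ₁)) with hη_def
  have hmin_pos : 0 < min (min 1 a) (min (μ₁/(2*v₁)) (v₁*a/μ₁)) :=
    lt_min (lt_min one_pos ha) (lt_min (by positivity) (by positivity))
  have hη_pos : 0 < η := by rw [hη_def]; exact mul_pos (by norm_num) hmin_pos
  have hη_le : η ≤ (1/2) * min 1 a := by
    rw [hη_def]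
    exact mul_le_mul_of_nonneg_left (min_le_left _ _) (by norm_num)
  have hη1 : η ≤ 1 := by
    have := min_le_left 1 a; linarith
  have hη2 : η * v₁ ≤ μ₁ / 2 := by
    have h : η ≤ (1/2) * (μ₁/(2*v₁)) := by
      rw [hη_def]
      exact mul_le_mul_of_nonneg_left
        (le_trans (min_le_right _ _) (min_le_left _ _)) (by norm_num)
    have h2 := mul_le_mul_of_nonneg_right h hv₁.le
    have h3 : (1/2) * (μ₁/(2*v₁)) * v₁ = μ₁/4 := by field_simp; ring
    rw [h3] at h2; linarith
  have hη3 : η * μ₁ ≤ v₁ * a := by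
    have h : η ≤ (1/2) * (v₁*a/μ₁) := by
      rw [hη_def]
      exact mul_le_mul_of_nonneg_left
        (le_trans (min_le_right _ _) (min_le_right _ _)) (by norm_num)
    have h2 := mul_le_mul_of_nonneg_right h hμ₁.le
    have h3 : (1/2) * (v₁*a/μ₁) * μ₁ = v₁*a/2 := by field_simp
    rw [h3] at h2
    nlinarith [mul_pos hv₁ ha]
  have hmin1a : 0 < min 1 a := lt_min one_pos ha
  set m : ℝ := min 1 a - η with hm_def
  have hm_pos : 0 < m := by rw [hm_def]; linarith
  set M' : ℝ := max 1 a + η with hM_def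
  have hM_pos : 0 < M' := by
    rw [hM_def]; have := le_max_left (1:ℝ) a; linarith
  have hmM : m ≤ 2*M' := by
    rw [hm_def, hM_def]
    have h1 : min 1 a ≤ max 1 a := min_le_of_left_le (le_max_left _ _)
    linarith
  set K : ℝ := 2*a*v₁ + 4*v₁ + 3*μ₁ with hK_def
  have hK_pos : 0 < K := by rw [hK_def]; positivity
  set c : ℝ := min (η*v₁*a/4) (μ₁/2) with hc_def
  have hc_pos : 0 < c := lt_min (by positivity) (by positivity)
  have hc1 : c ≤ η*v₁*a/4 := min_le_left _ _
  have hc2 : c ≤ μ₁/2 := min_le_right _ _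
  set σ : ℝ := c/K with hσ_def
  have hσ_pos : 0 < σ := by rw [hσ_def]; positivity
  have hσK : σ*K = c := by rw [hσ_def]; field_simp
  set lam : ℝ := c/(2*M') with hlam_def
  have hlam_pos : 0 < lam := by rw [hlam_def]; positivity
  have hlamc : 2*lam*M' = c := by rw [hlam_def]; field_simp
  have hdf_cont : ContinuousOn (deriv f) (Ioi 0) :=
    hf'.continuousOn_deriv_of_isOpen isOpen_Ioi le_rfl
  have hca : ContinuousAt (deriv f) ρ₀ := hdf_cont.continuousAt (isOpen_Ioi.mem_nhds hρ₀)
  obtain ⟨r₁, hr₁_pos, hr₁⟩ := Metric.continuousAt_iff.1 hca σ hσ_pos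
  set rρ : ℝ := min r₁ ρ₀ with hrρ_def
  have hrρ_pos : 0 < rρ := lt_min hr₁_pos hρ₀
  have hrρ1 : rρ ≤ r₁ := min_le_left _ _
  have hrρ2 : rρ ≤ ρ₀ := min_le_right _ _
  set ε : ℝ := min σ rρ / 4 with hε_def
  have hε_pos : 0 < ε := by
    rw [hε_def]; have := lt_min hσ_pos hrρ_pos; linarith
  have hεσ : ε ≤ σ/4 := by
    rw [hε_def]; have := min_le_left σ rρ; linarith
  have hεr : ε ≤ rρ/4 := by
    rw [hε_def]; have := min_le_right σ rρ; linarith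
  clear_value ε rρ lam σ c K M' m η a
  refine ⟨1, one_pos, ε, hε_pos, ?_⟩
  intro u₁ hu₁c hu₁per hu₁b ρT αT hρTpos hρT' hαT' hρTper hαTper hεT
  refine ⟨ε * Real.sqrt (m/(2*M')) / 2, by positivity, Real.sqrt (2*M'/m), ?_, lam, hlam_pos, ?_⟩
  · rw [Real.one_le_sqrt]
    rw [le_div_iff₀ hm_pos, one_mul]; exact hmM
  intro ρ α₁ hρpos hρ' hα₁' hinit t ht
  set X : ℝ → ℝ := fun s => ρ s - ρT s with hX_def
  set Y : ℝ → ℝ := fun s => α₁ s - αT s with hY_def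
  set DX : ℝ → ℝ := fun s => -(v₁*(Real.cos (α₁ s) - Real.cos (αT s))) with hDX_def
  set DY : ℝ → ℝ :=
    fun s => -(μ₁*(Real.cos (α₁ s) - Real.cos (αT s))) + v₁*(f (ρ s) - f (ρT s)) with hDY_def
  have hXs : ∀ s : ℝ, X s = ρ s - ρT s := fun s => rfl
  have hYs : ∀ s : ℝ, Y s = α₁ s - αT s := fun s => rfl
  have hDXs : ∀ s : ℝ, DX s = -(v₁*(Real.cos (α₁ s) - Real.cos (αT s))) := fun s => rfl
  have hDYs : ∀ s : ℝ,
      DY s = -(μ₁*(Real.cos (α₁ s) - Real.cos (αT s))) + v₁*(f (ρ s) - f (ρT s)) :=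
    fun s => rfl
  have hX' : ∀ s : ℝ, 0 ≤ s → HasDerivAt X (DX s) s := by
    intro s hs
    have h := (hρ' s hs).sub (hρT' s)
    have heq : DX s = -(v₁ * Real.cos (α₁ s)) - -(v₁ * Real.cos (αT s)) := by
      rw [hDXs s]; ring
    rw [heq]; exact h
  have hY' : ∀ s : ℝ, 0 ≤ s → HasDerivAt Y (DY s) s := by
    intro s hs
    have h := (hα₁' s hs).sub (hαT' s)
    have heq : DY s = (-(u₁ s) - μ₁ * Real.cos (α₁ s) + v₁ * f (ρ s))
        - (-(u₁ s) - μ₁ * Real.cos (αT s) + v₁ * f (ρT s)) := by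
      rw [hDYs s]; ring
    rw [heq]; exact h
  set V : ℝ → ℝ := fun s => a*(X s)^2 + (Y s)^2 - η*(X s * Y s) with hV_def
  set DV : ℝ → ℝ :=
    fun s => 2*a*(X s)*(DX s) + 2*(Y s)*(DY s) - η*((DX s)*(Y s) + (X s)*(DY s)) with hDV_def
  have hVs : ∀ s : ℝ, V s = a*(X s)^2 + (Y s)^2 - η*(X s * Y s) := fun s => rfl
  have hDVs : ∀ s : ℝ,
      DV s = 2*a*(X s)*(DX s) + 2*(Y s)*(DY s) - η*((DX s)*(Y s) + (X s)*(DY s)) :=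
    fun s => rfl
  have hV' : ∀ s : ℝ, 0 ≤ s → HasDerivAt V (DV s) s := by
    intro s hs
    have h1 := ((hX' s hs).pow 2).const_mul a
    have h2 := (hY' s hs).pow 2
    have h3 := ((hX' s hs).mul (hY' s hs)).const_mul η
    have h := (h1.add h2).sub h3
    refine h.congr_deriv ?_
    rw [hDVs s]
    push_cast
    ring
  clear_value X Y DX DY V DV
  clear hX_def hY_def hDX_def hDY_def hV_def hDV_def
  have hVlow : ∀ s : ℝ, m * ‖((X s, Y s) : ℝ × ℝ)‖^2 ≤ V s := by
    intro s
    have h := aux_lower a η (X s) (Y s) hη_pos.le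
    have h2 := (aux_norm (X s) (Y s)).2.2
    rw [hVs s, hm_def]
    have h3 : (min 1 a - η) * ‖((X s, Y s) : ℝ × ℝ)‖^2
        ≤ (min 1 a - η) * ((X s)^2 + (Y s)^2) :=
      mul_le_mul_of_nonneg_left h2 (by rw [← hm_def]; exact hm_pos.le)
    linarith
  have hVup : ∀ s : ℝ, V s ≤ M' * ((X s)^2 + (Y s)^2) := by
    intro s
    have h := aux_upper a η (X s) (Y s) hη_pos.le
    rw [hVs s, hM_def]
    linarith
  have hVup2 : ∀ s : ℝ, V s ≤ 2*M' * ‖((X s, Y s) : ℝ × ℝ)‖^2 := by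
    intro s
    have h := hVup s
    have h1 := (aux_norm (X s) (Y s)).1
    have h2 := (aux_norm (X s) (Y s)).2.1
    have h4 : M'*((X s)^2+(Y s)^2)
        ≤ M'*(‖((X s, Y s) : ℝ × ℝ)‖^2 + ‖((X s, Y s) : ℝ × ℝ)‖^2) :=
      mul_le_mul_of_nonneg_left (add_le_add h1 h2) hM_pos.le
    linarith
  have hVnn : ∀ s : ℝ, 0 ≤ V s := fun s => le_trans (by positivity) (hVlow s)
  have hTb : ∀ s : ℝ, |ρT s - ρ₀| < ε ∧ |αT s + π/2| < ε := by
    intro s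
    exact ⟨lt_of_le_of_lt (aux_fst_abs _ _) (hεT s), lt_of_le_of_lt (aux_snd_abs _ _) (hεT s)⟩
  -- the key dissipation estimate
  have hEst : ∀ s : ℝ, 0 ≤ s → ‖((X s, Y s) : ℝ × ℝ)‖ < ε → DV s ≤ -(2*lam) * V s := by
    intro s hs hreg
    have hXb : |X s| < ε := lt_of_le_of_lt (aux_fst_abs _ _) hreg
    have hYb : |Y s| < ε := lt_of_le_of_lt (aux_snd_abs _ _) hreg
    obtain ⟨hT1s, hT2s⟩ := hTb s
    set e₁ : ℝ := (Real.cos (α₁ s) - Real.cos (αT s)) - Y s with he₁_def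
    set e₂ : ℝ := (f (ρ s) - f (ρT s)) - a * X s with he₂_def
    have he₁ : |e₁| ≤ σ * |Y s| := by
      have hsub : ∀ θ ∈ Metric.closedBall (-(π/2)) σ,
          HasDerivWithinAt (fun θ => Real.cos θ - θ) (-Real.sin θ - 1)
            (Metric.closedBall (-(π/2)) σ) θ := by
        intro θ _
        exact ((Real.hasDerivAt_cos θ).sub (hasDerivAt_id θ)).hasDerivWithinAt
      have hbound : ∀ θ ∈ Metric.closedBall (-(π/2)) σ, ‖-Real.sin θ - 1‖ ≤ σ := by
        intro θ hθ
        have hlip : ‖Real.sin θ - Real.sin (-(π/2))‖ ≤ 1 * ‖θ - (-(π/2))‖ :=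
          Convex.norm_image_sub_le_of_norm_hasDerivWithin_le
            (f := Real.sin) (f' := fun p => Real.cos p)
            (fun p _ => (Real.hasDerivAt_sin p).hasDerivWithinAt)
            (fun p _ => by rw [Real.norm_eq_abs]; exact Real.abs_cos_le_one p)
            (convex_closedBall _ _) (Metric.mem_closedBall_self hσ_pos.le) hθ
        have hsv : Real.sin (-(π/2)) = -1 := by
          rw [Real.sin_neg, Real.sin_pi_div_two]
        rw [hsv, Real.norm_eq_abs, Real.norm_eq_abs, one_mul] at hlip
        have hd : |θ - (-(π/2))| ≤ σ := by
          have := Metric.mem_closedBall.1 hθ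
          rwa [Real.dist_eq] at this
        have heq : -Real.sin θ - 1 = -(Real.sin θ - (-1)) := by ring
        rw [Real.norm_eq_abs, heq, abs_neg]
        linarith
      have hmemT : αT s ∈ Metric.closedBall (-(π/2)) σ := by
        rw [Metric.mem_closedBall, Real.dist_eq]
        have heq : αT s - (-(π/2)) = αT s + π/2 := by ring
        rw [heq]
        linarith
      have hmem1 : α₁ s ∈ Metric.closedBall (-(π/2)) σ := by
        rw [Metric.mem_closedBall, Real.dist_eq]
        have heq : α₁ s - (-(π/2)) = Y s + (αT s + π/2) := by rw [hYs s]; ring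
        rw [heq]
        calc |Y s + (αT s + π/2)| ≤ |Y s| + |αT s + π/2| := abs_add_le _ _
          _ ≤ σ := by linarith
      have hmvt := Convex.norm_image_sub_le_of_norm_hasDerivWithin_le hsub hbound
        (convex_closedBall _ _) hmemT hmem1
      have hmvt' : |Real.cos (α₁ s) - α₁ s - (Real.cos (αT s) - αT s)|
          ≤ σ * |α₁ s - αT s| := by
        simpa [Real.norm_eq_abs] using hmvt
      have heq1 : Real.cos (α₁ s) - α₁ s - (Real.cos (αT s) - αT s) = e₁ := by
        rw [he₁_def, hYs s]; ring
      have heq2 : α₁ s - αT s = Y s := (hYs s).symm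
      rw [heq1, heq2] at hmvt'
      exact hmvt'
    have he₂ : |e₂| ≤ σ * |X s| := by
      have hsf_sub : ∀ p ∈ Metric.closedBall ρ₀ (2*ε), 0 < p ∧ dist p ρ₀ < r₁ := by
        intro p hp
        rw [Metric.mem_closedBall, Real.dist_eq] at hp
        obtain ⟨hp1, hp2⟩ := abs_le.1 hp
        constructor
        · linarith
        · rw [Real.dist_eq, abs_lt]; constructor <;> linarith
      have hsub : ∀ p ∈ Metric.closedBall ρ₀ (2*ε),
          HasDerivWithinAt (fun q => f q - a*q) (deriv f p - a)
            (Metric.closedBall ρ₀ (2*ε)) p := by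
        intro p hp
        have hpIoi : p ∈ Ioi (0:ℝ) := (hsf_sub p hp).1
        have hdfp : HasDerivAt f (deriv f p) p :=
          (((hf'.differentiableOn one_ne_zero).differentiableAt
            (isOpen_Ioi.mem_nhds hpIoi))).hasDerivAt
        have h2 : HasDerivAt (fun q => f q - a*q) (deriv f p - a) p := by
          exact (hdfp.sub ((hasDerivAt_id p).const_mul a)).congr_deriv (by simp)
        exact h2.hasDerivWithinAt
      have hbound : ∀ p ∈ Metric.closedBall ρ₀ (2*ε), ‖deriv f p - a‖ ≤ σ := by
        intro p hp
        have h := hr₁ (hsf_sub p hp).2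
        rw [Real.dist_eq, ← ha_def] at h
        rw [Real.norm_eq_abs]
        linarith
      have hmemT : ρT s ∈ Metric.closedBall ρ₀ (2*ε) := by
        rw [Metric.mem_closedBall, Real.dist_eq]
        linarith
      have hmem1 : ρ s ∈ Metric.closedBall ρ₀ (2*ε) := by
        rw [Metric.mem_closedBall, Real.dist_eq]
        have heq : ρ s - ρ₀ = X s + (ρT s - ρ₀) := by rw [hXs s]; ring
        rw [heq]
        calc |X s + (ρT s - ρ₀)| ≤ |X s| + |ρT s - ρ₀| := abs_add_le _ _
          _ ≤ 2*ε := by linarith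
      have hmvt := Convex.norm_image_sub_le_of_norm_hasDerivWithin_le hsub hbound
        (convex_closedBall _ _) hmemT hmem1
      have hmvt' : |f (ρ s) - a * ρ s - (f (ρT s) - a * ρT s)| ≤ σ * |ρ s - ρT s| := by
        simpa [Real.norm_eq_abs] using hmvt
      have heq1 : f (ρ s) - a * ρ s - (f (ρT s) - a * ρT s) = e₂ := by
        rw [he₂_def, hXs s]; ring
      have heq2 : ρ s - ρT s = X s := (hXs s).symm
      rw [heq1, heq2] at hmvt'
      exact hmvt'
    clear_value e₁ e₂
    have hDxe : DX s = -(v₁*(Y s + e₁)) := by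
      rw [hDXs s, he₁_def]; ring
    have hDye : DY s = v₁*(a*(X s) + e₂) - μ₁*(Y s + e₁) := by
      rw [hDYs s, he₂_def, he₁_def, hXs s]; ring
    have hid : DV s = (-(η*v₁*a)*(X s)^2 - (2*μ₁ - η*v₁)*(Y s)^2 + (η*μ₁)*((X s)*(Y s)))
        + ((-(2*a*v₁) + η*μ₁)*((X s)*e₁) + (η*v₁ - 2*μ₁)*((Y s)*e₁)
          + (-(η*v₁))*((X s)*e₂) + (2*v₁)*((Y s)*e₂)) := by
      rw [hDVs s, hDxe, hDye]
      ring
    have hXe₁ : |X s * e₁| ≤ σ * (((X s)^2 + (Y s)^2)/2) := by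
      calc |X s * e₁| = |X s| * |e₁| := abs_mul _ _
        _ ≤ |X s| * (σ * |Y s|) := mul_le_mul_of_nonneg_left he₁ (abs_nonneg _)
        _ = σ * (|X s| * |Y s|) := by ring
        _ ≤ σ * (((X s)^2 + (Y s)^2)/2) :=
            mul_le_mul_of_nonneg_left (aux_abs_mul_half _ _) hσ_pos.le
    have hYe₁ : |Y s * e₁| ≤ σ * (Y s)^2 := by
      calc |Y s * e₁| = |Y s| * |e₁| := abs_mul _ _
        _ ≤ |Y s| * (σ * |Y s|) := mul_le_mul_of_nonneg_left he₁ (abs_nonneg _)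
        _ = σ * (|Y s| * |Y s|) := by ring
        _ = σ * (Y s)^2 := by rw [← sq_abs (Y s)]; ring
    have hXe₂ : |X s * e₂| ≤ σ * (X s)^2 := by
      calc |X s * e₂| = |X s| * |e₂| := abs_mul _ _
        _ ≤ |X s| * (σ * |X s|) := mul_le_mul_of_nonneg_left he₂ (abs_nonneg _)
        _ = σ * (|X s| * |X s|) := by ring
        _ = σ * (X s)^2 := by rw [← sq_abs (X s)]; ring
    have hYe₂ : |Y s * e₂| ≤ σ * (((X s)^2 + (Y s)^2)/2) := by
      calc |Y s * e₂| = |Y s| * |e₂| := abs_mul _ _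
        _ ≤ |Y s| * (σ * |X s|) := mul_le_mul_of_nonneg_left he₂ (abs_nonneg _)
        _ = σ * (|X s| * |Y s|) := by ring
        _ ≤ σ * (((X s)^2 + (Y s)^2)/2) :=
            mul_le_mul_of_nonneg_left (aux_abs_mul_half _ _) hσ_pos.le
    have hb1 : (-(2*a*v₁) + η*μ₁)*((X s)*e₁) ≤ (2*a*v₁)*(σ*(((X s)^2+(Y s)^2)/2)) :=
      aux_mul_abs_le (-(2*a*v₁) + η*μ₁) ((X s)*e₁) (2*a*v₁) (σ*(((X s)^2+(Y s)^2)/2))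
        (by rw [abs_le]; constructor <;> linarith only [hη3, mul_pos hv₁ ha, mul_pos hη_pos hμ₁]) hXe₁
    have hb2 : (η*v₁ - 2*μ₁)*((Y s)*e₁) ≤ (2*μ₁)*(σ*(Y s)^2) :=
      aux_mul_abs_le (η*v₁ - 2*μ₁) ((Y s)*e₁) (2*μ₁) (σ*(Y s)^2)
        (by rw [abs_le]; constructor <;> linarith only [hη2, mul_pos hη_pos hv₁, hμ₁]) hYe₁
    have hb3 : (-(η*v₁))*((X s)*e₂) ≤ v₁*(σ*(X s)^2) :=
      aux_mul_abs_le (-(η*v₁)) ((X s)*e₂) v₁ (σ*(X s)^2)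
        (by rw [abs_le]; constructor <;> linarith only [mul_pos hη_pos hv₁,
          mul_nonneg (by linarith only [hη1] : (0:ℝ) ≤ 1 - η) hv₁.le]) hXe₂
    have hb4 : (2*v₁)*((Y s)*e₂) ≤ (2*v₁)*(σ*(((X s)^2+(Y s)^2)/2)) :=
      aux_mul_abs_le (2*v₁) ((Y s)*e₂) (2*v₁) (σ*(((X s)^2+(Y s)^2)/2))
        (by rw [abs_le]; constructor <;> linarith only [hv₁]) hYe₂
    have hsum : (2*a*v₁)*(σ*(((X s)^2+(Y s)^2)/2)) + (2*μ₁)*(σ*(Y s)^2) + v₁*(σ*(X s)^2)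
        + (2*v₁)*(σ*(((X s)^2+(Y s)^2)/2)) ≤ c*((X s)^2+(Y s)^2) := by
      rw [← hσK, hK_def]
      linarith only [mul_nonneg (mul_nonneg hσ_pos.le hv₁.le) (sq_nonneg (X s)),
        mul_nonneg (mul_nonneg hσ_pos.le hv₁.le) (sq_nonneg (Y s)),
        mul_nonneg (mul_nonneg hσ_pos.le hμ₁.le) (sq_nonneg (X s)),
        mul_nonneg (mul_nonneg hσ_pos.le hμ₁.le) (sq_nonneg (Y s)),
        mul_nonneg (mul_nonneg (mul_nonneg hσ_pos.le ha.le) hv₁.le) (sq_nonneg (X s)),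
        mul_nonneg (mul_nonneg (mul_nonneg hσ_pos.le ha.le) hv₁.le) (sq_nonneg (Y s))]
    have hA : 0 ≤ η*v₁*a - 2*c := by
      linarith only [hc1, hc_pos, mul_pos (mul_pos hη_pos hv₁) ha]
    have hC : 0 ≤ 2*μ₁ - η*v₁ - 2*c := by linarith only [hc2, hη2, hμ₁]
    have hB2 : (-(η*μ₁))^2 ≤ 4*(η*v₁*a - 2*c)*(2*μ₁ - η*v₁ - 2*c) := by
      have hA' : η*v₁*a/2 ≤ η*v₁*a - 2*c := by
        linarith only [hc1, mul_pos (mul_pos hη_pos hv₁) ha]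
      have hC' : μ₁/2 ≤ 2*μ₁ - η*v₁ - 2*c := by linarith only [hc2, hη2, hμ₁]
      have hp1 : η*v₁*a/2 * (μ₁/2) ≤ (η*v₁*a - 2*c)*(2*μ₁ - η*v₁ - 2*c) :=
        mul_le_mul hA' hC' (by positivity) (by linarith only [hA', mul_pos (mul_pos hη_pos hv₁) ha])
      linarith only [hp1, mul_le_mul_of_nonneg_left hη3 (mul_nonneg hη_pos.le hμ₁.le)]
    have hQ := aux_quad_nonneg (η*v₁*a - 2*c) (-(η*μ₁)) (2*μ₁ - η*v₁ - 2*c)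
      (X s) (Y s) hA hC hB2
    have hDVle : DV s ≤ -(c*((X s)^2+(Y s)^2)) := by
      rw [hid]; linarith only [hb1, hb2, hb3, hb4, hsum, hQ]
    have h1 : V s ≤ M'*((X s)^2+(Y s)^2) := hVup s
    have h2 : (2*lam)*(M'*((X s)^2+(Y s)^2)) = c*((X s)^2+(Y s)^2) := by
      linear_combination ((X s)^2+(Y s)^2) * hlamc
    have h3 : (2*lam)*(V s) ≤ (2*lam)*(M'*((X s)^2+(Y s)^2)) :=
      mul_le_mul_of_nonneg_left h1 (by positivity)
    linarith only [hDVle, h2, h3]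
  -- the solution stays in the region
  have hV0 : V 0 < m*ε^2/2 := by
    have h1 := hVup2 0
    have h2 : ‖((X 0, Y 0) : ℝ × ℝ)‖ < ε * Real.sqrt (m/(2*M'))/2 := by
      rw [hXs 0, hYs 0]; exact hinit
    have h3 : (0:ℝ) ≤ ‖((X 0, Y 0) : ℝ × ℝ)‖ := norm_nonneg _
    have h4 : ‖((X 0, Y 0) : ℝ × ℝ)‖^2 ≤ (ε * Real.sqrt (m/(2*M'))/2)^2 :=
      pow_le_pow_left₀ h3 h2.le 2
    have h5 : (ε * Real.sqrt (m/(2*M'))/2)^2 = ε^2 * (m/(2*M'))/4 := by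
      rw [div_pow, mul_pow, Real.sq_sqrt (by positivity)]
      norm_num
    have h6 : 2*M' * (ε^2 * (m/(2*M'))/4) = m*ε^2/4 := by
      field_simp
    have h7 := mul_le_mul_of_nonneg_left h4 (by positivity : (0:ℝ) ≤ 2*M')
    rw [h5] at h7
    rw [h6] at h7
    linarith only [h1, h7, mul_pos hm_pos (pow_pos hε_pos 2)]
  have hGlob : ∀ s : ℝ, 0 ≤ s → V s < m*ε^2 := by
    by_contra hcon
    push_neg at hcon
    obtain ⟨s₀, hs₀, hVs₀⟩ := hcon
    set Bset : Set ℝ := {r | 0 ≤ r ∧ m*ε^2 ≤ V r} with hB_def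
    have hBne : Bset.Nonempty := ⟨s₀, hs₀, hVs₀⟩
    have hBbd : BddBelow Bset := ⟨0, fun r hr => hr.1⟩
    set τ := sInf Bset with hτ_def
    have hτ0 : 0 ≤ τ := le_csInf hBne fun r hr => hr.1
    have hτcl : τ ∈ closure Bset := csInf_mem_closure hBne hBbd
    obtain ⟨w, hwB, hw⟩ := mem_closure_iff_seq_limit.1 hτcl
    have hVτ : m*ε^2 ≤ V τ := by
      have hcτ : ContinuousAt V τ := (hV' τ hτ0).continuousAt
      have hten := hcτ.tendsto.comp hw
      exact ge_of_tendsto hten (Filter.Eventually.of_forall fun n => (hwB n).2)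
    have hmε : 0 < m*ε^2 := mul_pos hm_pos (pow_pos hε_pos 2)
    have hτpos : 0 < τ := by
      rcases lt_or_eq_of_le hτ0 with h | h
      · exact h
      · exfalso; rw [← h] at hVτ; linarith only [hVτ, hV0, hmε]
    have hlt : ∀ r : ℝ, 0 ≤ r → r < τ → V r < m*ε^2 := by
      intro r hr hrτ
      by_contra h'
      push_neg at h'
      exact absurd (csInf_le hBbd ⟨hr, h'⟩) (not_le.2 hrτ)
    have hanti : AntitoneOn V (Icc 0 τ) := by
      apply antitoneOn_of_deriv_nonpos (convex_Icc 0 τ)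
      · intro r hr
        exact ((hV' r hr.1).continuousAt).continuousWithinAt
      · rw [interior_Icc]
        intro r hr
        exact ((hV' r hr.1.le).differentiableAt).differentiableWithinAt
      · rw [interior_Icc]
        intro r hr
        have hVr := hlt r hr.1.le hr.2
        have h1 := hVlow r
        have hregr : ‖((X r, Y r) : ℝ × ℝ)‖ < ε := by
          have h2 : m * ‖((X r, Y r) : ℝ × ℝ)‖^2 < m * ε^2 := by linarith only [h1, hVr]
          have h3 : ‖((X r, Y r) : ℝ × ℝ)‖^2 < ε^2 := lt_of_mul_lt_mul_left h2 hm_pos.le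
          nlinarith only [h3, hε_pos]
        have hE := hEst r hr.1.le hregr
        rw [(hV' r hr.1.le).deriv]
        linarith only [hE, mul_nonneg hlam_pos.le (hVnn r)]
    have hfinal : V τ ≤ V 0 := hanti (left_mem_Icc.2 hτ0) (right_mem_Icc.2 hτ0) hτ0
    linarith only [hVτ, hfinal, hV0, hmε]
  -- exponential decay of V
  have hWd : ∀ r : ℝ, 0 ≤ r →
      HasDerivAt (fun q => V q * Real.exp (2*lam*q))
        (DV r * Real.exp (2*lam*r) + V r * (Real.exp (2*lam*r)*(2*lam))) r := by
    intro r hr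
    have he : HasDerivAt (fun q : ℝ => Real.exp (2*lam*q)) (Real.exp (2*lam*r)*(2*lam)) r := by
      have h := ((hasDerivAt_id r).const_mul (2*lam)).exp
      simpa using h
    exact (hV' r hr).mul he
  have hWanti : AntitoneOn (fun q => V q * Real.exp (2*lam*q)) (Ici 0) := by
    apply antitoneOn_of_deriv_nonpos (convex_Ici 0)
    · intro r hr
      exact ((hWd r hr).continuousAt).continuousWithinAt
    · rw [interior_Ici]
      intro r hr
      exact ((hWd r hr.le).differentiableAt).differentiableWithinAt
    · rw [interior_Ici]
      intro r hr
      rw [(hWd r hr.le).deriv]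
      have h1 := hVlow r
      have h2 := hGlob r hr.le
      have hregr : ‖((X r, Y r) : ℝ × ℝ)‖ < ε := by
        have h3 : ‖((X r, Y r) : ℝ × ℝ)‖^2 < ε^2 := by
          have h4 : m * ‖((X r, Y r) : ℝ × ℝ)‖^2 < m * ε^2 := by linarith only [h1, h2]
          exact lt_of_mul_lt_mul_left h4 hm_pos.le
        nlinarith only [h3, hε_pos]
      have hE := hEst r hr.le hregr
      have hsum : DV r + 2*lam*(V r) ≤ 0 := by linarith only [hE]
      have h0 := mul_le_mul_of_nonneg_right hsum (Real.exp_pos (2*lam*r)).le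
      rw [zero_mul] at h0
      linarith only [h0]
  have hVt : V t * Real.exp (2*lam*t) ≤ V 0 := by
    have h := hWanti Set.self_mem_Ici (mem_Ici.2 ht) ht
    simpa using h
  have h3 : V t ≤ V 0 * Real.exp (-(2*lam*t)) := by
    have hE := Real.exp_pos (2*lam*t)
    rw [Real.exp_neg]
    calc V t = V t * Real.exp (2*lam*t) * (Real.exp (2*lam*t))⁻¹ := by field_simp
      _ ≤ V 0 * (Real.exp (2*lam*t))⁻¹ :=
          mul_le_mul_of_nonneg_right hVt (inv_nonneg.2 hE.le)
  have hgoal_eq : ((ρ t - ρT t, α₁ t - αT t) : ℝ × ℝ) = (X t, Y t) := by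
    rw [hXs t, hYs t]
  have hinit_eq : ((ρ 0 - ρT 0, α₁ 0 - αT 0) : ℝ × ℝ) = (X 0, Y 0) := by
    rw [hXs 0, hYs 0]
  rw [hgoal_eq, hinit_eq]
  have hNt0 : (0:ℝ) ≤ ‖((X t, Y t) : ℝ × ℝ)‖ := norm_nonneg _
  have hN00 : (0:ℝ) ≤ ‖((X 0, Y 0) : ℝ × ℝ)‖ := norm_nonneg _
  have hlow := hVlow t
  have hup := hVup2 0
  have hchain : m * ‖((X t, Y t) : ℝ × ℝ)‖^2
      ≤ 2*M' * ‖((X 0, Y 0) : ℝ × ℝ)‖^2 * Real.exp (-(2*lam*t)) := by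
    have h4 : V 0 * Real.exp (-(2*lam*t))
        ≤ 2*M' * ‖((X 0, Y 0) : ℝ × ℝ)‖^2 * Real.exp (-(2*lam*t)) :=
      mul_le_mul_of_nonneg_right hup (Real.exp_pos _).le
    calc m * ‖((X t, Y t) : ℝ × ℝ)‖^2 ≤ V t := hlow
      _ ≤ V 0 * Real.exp (-(2*lam*t)) := h3
      _ ≤ 2*M' * ‖((X 0, Y 0) : ℝ × ℝ)‖^2 * Real.exp (-(2*lam*t)) := h4
  have hR2 : (Real.sqrt (2*M'/m) * Real.exp (-lam*t) * ‖((X 0, Y 0) : ℝ × ℝ)‖)^2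
      = (2*M'/m) * Real.exp (-(2*lam*t)) * ‖((X 0, Y 0) : ℝ × ℝ)‖^2 := by
    rw [mul_pow, mul_pow, Real.sq_sqrt (by positivity)]
    congr 2
    rw [sq, ← Real.exp_add]
    congr 1
    ring
  have hNt2 : ‖((X t, Y t) : ℝ × ℝ)‖^2
      ≤ (Real.sqrt (2*M'/m) * Real.exp (-lam*t) * ‖((X 0, Y 0) : ℝ × ℝ)‖)^2 := by
    rw [hR2]
    rw [div_mul_eq_mul_div, div_mul_eq_mul_div, le_div_iff₀ hm_pos]
    linarith only [hchain]
  exact aux_sqrt_le _ _ hNt0 (by positivity) hNt2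
end
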